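/- arXiv:math/0409018 — 5 statements merged into one kernel-verified Lean document; each statement's English description precedes it below -/
import Mathlib

section
/- Let f, g : ℝ² → ℝ be measurable. Then for all s, t > 0 one has (f+g)**_{yx}(s,t) ≤ f**_{yx}(s,t) + g**_{yx}(s,t); that is, the operator f ↦ f**_{yx} is subadditive. -/
open MeasureTheory ENNReal Set

noncomputable section

/-- Decreasing rearrangement of an `ℝ≥0∞`-valued function on `ℝ` (w.r.t. Lebesgue measure):
`h*(t) = inf {σ : |{x : σ < h x}| ≤ t}`. -/
def rearrE (h : ℝ → ℝ≥0∞) (t : ℝ) : ℝ≥0∞ :=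
  sInf {σ : ℝ≥0∞ | volume {x : ℝ | σ < h x} ≤ ENNReal.ofReal t}

/-- Decreasing rearrangement of a real-valued function on `ℝ`. -/
def rearr (h : ℝ → ℝ) (t : ℝ) : ℝ≥0∞ :=
  rearrE (fun x => ENNReal.ofReal |h x|) t

/-- `f*_y(x,t)`: rearrangement in the second variable. -/
def rearrY (f : ℝ × ℝ → ℝ) (x t : ℝ) : ℝ≥0∞ := rearr (fun y => f (x, y)) t

/-- `f*_x(s,y)`: rearrangement in the first variable. -/
def rearrX (f : ℝ × ℝ → ℝ) (s y : ℝ) : ℝ≥0∞ := rearr (fun x => f (x, y)) s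

/-- The multivariate rearrangement `f*_{yx}(s,t) = (x ↦ f*_y(x,t))*(s)`. -/
def rearrYX (f : ℝ × ℝ → ℝ) (s t : ℝ) : ℝ≥0∞ := rearrE (fun x => rearrY f x t) s

/-- `f**_{yx}(s,t) = (1/s)∫_0^s (x ↦ (1/t)∫_0^t f*_y(x,τ) dτ)*(σ) dσ`. -/
def starstarYX (f : ℝ × ℝ → ℝ) (s t : ℝ) : ℝ≥0∞ :=
  (ENNReal.ofReal s)⁻¹ *
    ∫⁻ σ in Ioo (0:ℝ) s,
      rearrE (fun x => (ENNReal.ofReal t)⁻¹ * ∫⁻ τ in Ioo (0:ℝ) t, rearrY f x τ) σ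

/-- `f**(s,t) = (1/(st))∫_0^s∫_0^t f*_{yx}(σ,τ) dσ dτ`. -/
def starstar (f : ℝ × ℝ → ℝ) (s t : ℝ) : ℝ≥0∞ :=
  (ENNReal.ofReal (s * t))⁻¹ * ∫⁻ σ in Ioo (0:ℝ) s, ∫⁻ τ in Ioo (0:ℝ) t, rearrYX f σ τ

/-- Decreasing rearrangement of `f : ℝ² → ℝ` w.r.t. two-dimensional Lebesgue measure. -/
def rearr2 (f : ℝ × ℝ → ℝ) (θ : ℝ) : ℝ≥0∞ :=
  sInf {σ : ℝ≥0∞ | volume {z : ℝ × ℝ | σ < ENNReal.ofReal |f z|} ≤ ENNReal.ofReal θ}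

/-- A weight on `ℝ₊`: nonnegative and locally integrable. -/
def IsWeight (u : ℝ → ℝ) : Prop :=
  (∀ x, 0 ≤ u x) ∧ LocallyIntegrableOn u (Ioi 0)

/-- A weight on `ℝ²₊`: nonnegative and locally integrable. -/
def IsWeight2 (w : ℝ × ℝ → ℝ) : Prop :=
  (∀ z, 0 ≤ w z) ∧ LocallyIntegrableOn w (Ioi 0 ×ˢ Ioi 0)

/-- `‖g‖_{Λ^p(u)}` for `g : ℝ → ℝ`. -/
def lamNorm (p : ℝ) (u : ℝ → ℝ) (g : ℝ → ℝ) : ℝ≥0∞ :=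
  (∫⁻ t in Ioi (0:ℝ), (rearr g t) ^ p * ENNReal.ofReal (u t)) ^ (1 / p)

/-- `‖f‖_{Λ₂^p(w)}` for `f : ℝ² → ℝ` and a weight `w` on `ℝ²₊`. -/
def lam2Norm (p : ℝ) (w : ℝ × ℝ → ℝ) (f : ℝ × ℝ → ℝ) : ℝ≥0∞ :=
  (∫⁻ s in Ioi (0:ℝ), ∫⁻ t in Ioi (0:ℝ),
      (rearrYX f s t) ^ p * ENNReal.ofReal (w (s, t))) ^ (1 / p)

/-- `‖f‖_{Λ^p(ℝ²,u)}`, by means of the 2D rearrangement. -/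
def lamR2Norm (p : ℝ) (u : ℝ → ℝ) (f : ℝ × ℝ → ℝ) : ℝ≥0∞ :=
  (∫⁻ θ in Ioi (0:ℝ), (rearr2 f θ) ^ p * ENNReal.ofReal (u θ)) ^ (1 / p)

/-- The mixed Lorentz quasinorm `‖f‖_{Λ^p(u)[Λ^p(v)]}`. -/
def mixedNorm (p : ℝ) (u v : ℝ → ℝ) (f : ℝ × ℝ → ℝ) : ℝ≥0∞ :=
  (∫⁻ s in Ioi (0:ℝ),
      rearrE (fun x => ∫⁻ t in Ioi (0:ℝ), (rearrY f x t) ^ p * ENNReal.ofReal (v t)) s *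
        ENNReal.ofReal (u s)) ^ (1 / p)

/-- The mixed Lorentz quasinorm with the order of the variables reversed,
`‖f‖_{Λ^p(v)[Λ^p(u)]}`. -/
def mixedNormRev (p : ℝ) (v u : ℝ → ℝ) (f : ℝ × ℝ → ℝ) : ℝ≥0∞ :=
  (∫⁻ t in Ioi (0:ℝ),
      rearrE (fun y => ∫⁻ s in Ioi (0:ℝ), (rearrX f s y) ^ p * ENNReal.ofReal (u s)) t *
        ENNReal.ofReal (v t)) ^ (1 / p)

/-- The `B_p` condition for a weight on `ℝ₊`. -/
def Bp (p : ℝ) (v : ℝ → ℝ) : Prop :=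
  ∃ C : ℝ, 0 < C ∧ ∀ r : ℝ, 0 < r →
    ENNReal.ofReal (r ^ p) * ∫⁻ x in Ioi r, ENNReal.ofReal (v x / x ^ p) ≤
      ENNReal.ofReal C * ∫⁻ x in Ioo (0:ℝ) r, ENNReal.ofReal (v x)

/-- Two-dimensional Hardy operator acting on `ℝ≥0∞`-valued functions. -/
def S2E (g : ℝ × ℝ → ℝ≥0∞) (s t : ℝ) : ℝ≥0∞ :=
  (ENNReal.ofReal (s * t))⁻¹ * ∫⁻ σ in Ioo (0:ℝ) s, ∫⁻ τ in Ioo (0:ℝ) t, g (σ, τ)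

/-- Nonincreasing in each variable on `ℝ²₊`. -/
def BiAntitone (g : ℝ × ℝ → ℝ≥0∞) : Prop :=
  ∀ s s' t t' : ℝ, 0 < s' → s' ≤ s → 0 < t' → t' ≤ t → g (s, t) ≤ g (s', t')

/-- The class `B_p^{(2)}`: the two-dimensional Hardy operator is bounded on the cone of
nonnegative functions nonincreasing in each variable in `L^p(ℝ²₊, w)`. -/
def Bp2 (p : ℝ) (w : ℝ × ℝ → ℝ) : Prop :=
  ∃ C : ℝ, 0 < C ∧ ∀ g : ℝ × ℝ → ℝ≥0∞, Measurable g → BiAntitone g →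
    (∫⁻ s in Ioi (0:ℝ), ∫⁻ t in Ioi (0:ℝ), (S2E g s t) ^ p * ENNReal.ofReal (w (s, t))) ≤
      ENNReal.ofReal C *
        ∫⁻ s in Ioi (0:ℝ), ∫⁻ t in Ioi (0:ℝ), (g (s, t)) ^ p * ENNReal.ofReal (w (s, t))

/-- A decreasing subset of `ℝ²₊`. -/
def DecreasingSet (D : Set (ℝ × ℝ)) : Prop :=
  MeasurableSet D ∧ D ⊆ Ioi 0 ×ˢ Ioi 0 ∧
    ∀ s t s' t' : ℝ, (s, t) ∈ D → 0 < s' → s' ≤ s → 0 < t' → t' ≤ t → (s', t') ∈ D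

/-- `w(E) = ∫_E w`. -/
def wMeas (w : ℝ × ℝ → ℝ) (E : Set (ℝ × ℝ)) : ℝ≥0∞ := ∫⁻ z in E, ENNReal.ofReal (w z)

/-- `U(m) = ∫_0^m u(θ) dθ`, for `m ∈ [0,∞]`. -/
def Uof (u : ℝ → ℝ) (m : ℝ≥0∞) : ℝ≥0∞ :=
  ∫⁻ θ in {θ : ℝ | 0 < θ ∧ ENNReal.ofReal θ < m}, ENNReal.ofReal (u θ)

/-- A covering family of `ℝ²₊`: an increasing sequence of decreasing sets covering `ℝ²₊`. -/
def CoveringFamily (D : ℕ → Set (ℝ × ℝ)) : Prop :=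
  (∀ k, DecreasingSet (D k)) ∧ Monotone D ∧ (⋃ k, D k) = Ioi 0 ×ˢ Ioi 0

end


namespace RK


lemma rearrE_attained (h : ℝ → ℝ≥0∞) (t : ℝ) :
    volume {x : ℝ | rearrE h t < h x} ≤ ENNReal.ofReal t := by
  set S := {σ : ℝ≥0∞ | volume {x : ℝ | σ < h x} ≤ ENNReal.ofReal t} with hS
  have hup : ∀ a ∈ S, ∀ b, a ≤ b → b ∈ S := by
    intro a ha b hab
    exact le_trans (measure_mono (fun x hx => lt_of_le_of_lt hab hx)) ha
  have htop : (∞ : ℝ≥0∞) ∈ S := by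
    have : {x : ℝ | (∞:ℝ≥0∞) < h x} = ∅ := by
      ext x; simp
    simp [hS, this]
  rcases eq_or_ne (rearrE h t) ∞ with hinf | hfin
  · rw [hinf]
    have : {x : ℝ | (∞:ℝ≥0∞) < h x} = ∅ := by ext x; simp
    simp [this]
  · have hmem : ∀ n : ℕ, rearrE h t + ((n:ℝ≥0∞))⁻¹ ∈ S := by
      intro n
      rcases eq_or_ne n 0 with rfl | hn
      · simpa using htop
      have hlt : rearrE h t < rearrE h t + (n:ℝ≥0∞)⁻¹ := by
        refine ENNReal.lt_add_right hfin ?_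
        simp [hn]
      obtain ⟨a, haS, ha⟩ := sInf_lt_iff.mp hlt
      exact hup a haS _ ha.le
    have hcov : {x : ℝ | rearrE h t < h x} = ⋃ n : ℕ, {x : ℝ | rearrE h t + ((n:ℝ≥0∞))⁻¹ < h x} := by
      ext x
      simp only [mem_setOf_eq, mem_iUnion]
      constructor
      · intro hx
        have hne : h x - rearrE h t ≠ 0 := by
          simpa [tsub_eq_zero_iff_le, not_le] using hx.not_ge
        obtain ⟨n, hn⟩ := ENNReal.exists_inv_nat_lt hne
        exact ⟨n, by
          have := lt_tsub_iff_left.mp hn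
          exact this⟩
      · rintro ⟨n, hn⟩
        exact lt_of_le_of_lt le_self_add hn
    rw [hcov]
    have hmono : Monotone (fun n : ℕ => {x : ℝ | rearrE h t + ((n:ℝ≥0∞))⁻¹ < h x}) := by
      intro m n hmn x hx
      have hinv : ((n:ℝ≥0∞))⁻¹ ≤ ((m:ℝ≥0∞))⁻¹ := ENNReal.inv_le_inv.mpr (by exact_mod_cast hmn)
      exact lt_of_le_of_lt (add_le_add_right hinv (rearrE h t)) hx
    have hdir : Directed (· ⊆ ·) (fun n : ℕ => {x : ℝ | rearrE h t + ((n:ℝ≥0∞))⁻¹ < h x}) :=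
      hmono.directed_le
    rw [Directed.measure_iUnion hdir]
    exact iSup_le fun n => hmem n

lemma rearrE_le_iff {h : ℝ → ℝ≥0∞} {t : ℝ} {l : ℝ≥0∞} :
    rearrE h t ≤ l ↔ volume {x : ℝ | l < h x} ≤ ENNReal.ofReal t := by
  constructor
  · intro hle
    exact le_trans (measure_mono (fun x hx => lt_of_le_of_lt hle hx)) (rearrE_attained h t)
  · intro hl
    exact sInf_le hl

lemma lt_rearrE_iff {h : ℝ → ℝ≥0∞} {t : ℝ} {l : ℝ≥0∞} :
    l < rearrE h t ↔ ENNReal.ofReal t < volume {x : ℝ | l < h x} := by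
  rw [← not_le, ← not_le, rearrE_le_iff]

lemma rearrE_mono {h h' : ℝ → ℝ≥0∞} (hh : ∀ x, h x ≤ h' x) (t : ℝ) :
    rearrE h t ≤ rearrE h' t := by
  apply sInf_le_sInf
  intro σ hσ
  exact le_trans (measure_mono (fun x hx => lt_of_lt_of_le hx (hh x))) hσ

lemma rearrE_anti (h : ℝ → ℝ≥0∞) {t t' : ℝ} (htt : t' ≤ t) :
    rearrE h t ≤ rearrE h t' := by
  apply sInf_le_sInf
  intro σ hσ
  exact le_trans hσ (ENNReal.ofReal_le_ofReal htt)

lemma rearrE_antitone (h : ℝ → ℝ≥0∞) : Antitone (rearrE h) :=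
  fun _ _ htt => rearrE_anti h htt

lemma meas_pt (a : ℝ≥0∞) : volume {l : ℝ | 0 < l ∧ ENNReal.ofReal l < a} = a := by
  rcases eq_or_ne a ∞ with rfl | ha
  · have : {l : ℝ | 0 < l ∧ ENNReal.ofReal l < ∞} = Ioi 0 := by
      ext l; simp [mem_Ioi]
    rw [this]; simp [Real.volume_Ioi]
  · have : {l : ℝ | 0 < l ∧ ENNReal.ofReal l < a} = Ioo 0 a.toReal := by
      ext l
      simp only [mem_setOf_eq, mem_Ioo]
      constructor
      · rintro ⟨hl, hla⟩
        exact ⟨hl, (ENNReal.ofReal_lt_iff_lt_toReal hl.le ha).mp hla⟩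
      · rintro ⟨hl, hla⟩
        exact ⟨hl, (ENNReal.ofReal_lt_iff_lt_toReal hl.le ha).mpr hla⟩
    rw [this, Real.volume_Ioo]
    rcases le_or_gt a.toReal 0 with h0 | h0
    · have : a = 0 := by
        have := ENNReal.toReal_nonneg (a := a)
        have : a.toReal = 0 := le_antisymm h0 this
        exact (ENNReal.toReal_eq_zero_iff a).mp this |>.resolve_right ha
      simp [this, ENNReal.ofReal_eq_zero.mpr (by linarith)]
    · rw [sub_zero, ENNReal.ofReal_toReal ha]



lemma layercake (G : ℝ → ℝ≥0∞) (hG : Measurable G) :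
    ∫⁻ x, G x = ∫⁻ l in Ioi (0:ℝ), volume {x : ℝ | ENNReal.ofReal l < G x} := by
  have hpt : ∀ x : ℝ, G x = volume {l : ℝ | 0 < l ∧ ENNReal.ofReal l < G x} :=
    fun x => (meas_pt (G x)).symm
  set A : Set (ℝ × ℝ) := {p : ℝ × ℝ | 0 < p.2 ∧ ENNReal.ofReal p.2 < G p.1} with hA
  have hAmeas : MeasurableSet A := by
    have h1 : MeasurableSet {p : ℝ × ℝ | 0 < p.2} :=
      measurableSet_lt measurable_const measurable_snd
    have h2 : MeasurableSet {p : ℝ × ℝ | ENNReal.ofReal p.2 < G p.1} :=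
      measurableSet_lt (ENNReal.measurable_ofReal.comp measurable_snd) (hG.comp measurable_fst)
    exact h1.inter h2
  calc ∫⁻ x, G x = ∫⁻ x, volume (Prod.mk x ⁻¹' A) := by
        refine lintegral_congr fun x => ?_
        rw [hpt x]; rfl
    _ = ((volume : Measure ℝ).prod volume) A := (Measure.prod_apply hAmeas).symm
    _ = ∫⁻ l, (volume : Measure ℝ) ((fun x => (x, l)) ⁻¹' A) := Measure.prod_apply_symm hAmeas
    _ = ∫⁻ l in Ioi (0:ℝ), volume {x : ℝ | ENNReal.ofReal l < G x} := by
        have : ∀ l : ℝ, (volume : Measure ℝ) ((fun x => (x, l)) ⁻¹' A) =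
            (Ioi (0:ℝ)).indicator (fun l => volume {x : ℝ | ENNReal.ofReal l < G x}) l := by
          intro l
          rcases le_or_gt l 0 with hl | hl
          · have : ((fun x => (x, l)) ⁻¹' A) = ∅ := by
              ext x; simp [hA, not_lt.mpr hl]
            rw [this]
            simp [Set.indicator_of_notMem (by simpa using hl : l ∉ Ioi (0:ℝ))]
          · rw [Set.indicator_of_mem (mem_Ioi.mpr hl)]
            congr 1
            ext x; simp [hA, hl]
        rw [funext this, lintegral_indicator measurableSet_Ioi]

lemma shiftIoi (g : ℝ → ℝ≥0∞) (c : ℝ) :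
    ∫⁻ l in Ioi c, g l = ∫⁻ n in Ioi (0:ℝ), g (n + c) := by
  have h1 : ∫⁻ l in Ioi c, g l = ∫⁻ l, (Ioi c).indicator g l :=
    (lintegral_indicator measurableSet_Ioi g).symm
  have h2 : ∫⁻ l, (Ioi c).indicator g l = ∫⁻ n, (Ioi c).indicator g (n + c) :=
    (lintegral_add_right_eq_self (fun l => (Ioi c).indicator g l) c).symm
  have h3 : ∀ n : ℝ, (Ioi c).indicator g (n + c) =
      (Ioi (0:ℝ)).indicator (fun n => g (n + c)) n := by
    intro n
    rcases lt_or_ge 0 n with hn | hn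
    · rw [Set.indicator_of_mem (mem_Ioi.mpr (by linarith)), Set.indicator_of_mem (mem_Ioi.mpr hn)]
    · rw [Set.indicator_of_notMem (by simp; linarith), Set.indicator_of_notMem (by simpa using hn)]
  rw [h1, h2, funext h3, lintegral_indicator measurableSet_Ioi]


lemma sliceMeas (G : ℝ → ℝ≥0∞) {s : ℝ} (hs : 0 < s) (l : ℝ≥0∞) :
    volume ({σ : ℝ | l < rearrE G σ} ∩ Ioo 0 s) =
      min (ENNReal.ofReal s) (volume {x : ℝ | l < G x}) := by
  set d := volume {x : ℝ | l < G x} with hd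
  have hiff : ∀ σ : ℝ, (l < rearrE G σ ↔ ENNReal.ofReal σ < d) := fun σ => lt_rearrE_iff
  rcases le_or_gt (ENNReal.ofReal s) d with hle | hlt
  · have hset : {σ : ℝ | l < rearrE G σ} ∩ Ioo 0 s = Ioo 0 s := by
      apply inter_eq_right.mpr
      intro σ hσ
      rw [mem_setOf_eq, hiff σ]
      exact lt_of_lt_of_le ((ENNReal.ofReal_lt_ofReal_iff hs).mpr hσ.2) hle
    rw [hset, Real.volume_Ioo, min_eq_left hle, sub_zero]
  · have hdne : d ≠ ∞ := ne_top_of_lt hlt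
    have hset : {σ : ℝ | l < rearrE G σ} ∩ Ioo 0 s = Ioo 0 d.toReal := by
      ext σ
      simp only [mem_inter_iff, mem_setOf_eq, mem_Ioo, hiff σ]
      constructor
      · rintro ⟨hσd, h0, hσs⟩
        exact ⟨h0, (ENNReal.ofReal_lt_iff_lt_toReal h0.le hdne).mp hσd⟩
      · rintro ⟨h0, hσd⟩
        have h1 : ENNReal.ofReal σ < d := (ENNReal.ofReal_lt_iff_lt_toReal h0.le hdne).mpr hσd
        refine ⟨h1, h0, ?_⟩
        have : d.toReal < s := by
          have := ENNReal.toReal_lt_toReal hdne (by simp : (ENNReal.ofReal s) ≠ ∞) |>.mpr hlt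
          rwa [ENNReal.toReal_ofReal hs.le] at this
        linarith
    rw [hset, Real.volume_Ioo, min_eq_right hlt.le, sub_zero, ENNReal.ofReal_toReal hdne]

lemma keyI (G : ℝ → ℝ≥0∞) {s : ℝ} (hs : 0 < s) :
    ∫⁻ σ in Ioo (0:ℝ) s, rearrE G σ =
      ∫⁻ l in Ioi (0:ℝ), min (ENNReal.ofReal s) (volume {x : ℝ | ENNReal.ofReal l < G x}) := by
  have hRmeas : Measurable (rearrE G) := (rearrE_antitone G).measurable
  have hpt : ∀ σ : ℝ, rearrE G σ = volume {l : ℝ | 0 < l ∧ ENNReal.ofReal l < rearrE G σ} :=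
    fun σ => (meas_pt _).symm
  set A : Set (ℝ × ℝ) := {p : ℝ × ℝ | 0 < p.2 ∧ ENNReal.ofReal p.2 < rearrE G p.1} with hA
  have hAmeas : MeasurableSet A := by
    have h1 : MeasurableSet {p : ℝ × ℝ | 0 < p.2} :=
      measurableSet_lt measurable_const measurable_snd
    have h2 : MeasurableSet {p : ℝ × ℝ | ENNReal.ofReal p.2 < rearrE G p.1} :=
      measurableSet_lt (ENNReal.measurable_ofReal.comp measurable_snd)
        (hRmeas.comp measurable_fst)
    exact h1.inter h2
  calc ∫⁻ σ in Ioo (0:ℝ) s, rearrE G σ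
      = ∫⁻ σ in Ioo (0:ℝ) s, volume (Prod.mk σ ⁻¹' A) := by
        refine lintegral_congr fun σ => ?_
        rw [hpt σ]; rfl
    _ = ((volume.restrict (Ioo (0:ℝ) s)).prod volume) A := (Measure.prod_apply hAmeas).symm
    _ = ∫⁻ l, (volume.restrict (Ioo (0:ℝ) s)) ((fun σ => (σ, l)) ⁻¹' A) :=
        Measure.prod_apply_symm hAmeas
    _ = ∫⁻ l in Ioi (0:ℝ), min (ENNReal.ofReal s) (volume {x : ℝ | ENNReal.ofReal l < G x}) := by
        have : ∀ l : ℝ, (volume.restrict (Ioo (0:ℝ) s)) ((fun σ => (σ, l)) ⁻¹' A) =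
            (Ioi (0:ℝ)).indicator
              (fun l => min (ENNReal.ofReal s) (volume {x : ℝ | ENNReal.ofReal l < G x})) l := by
          intro l
          rcases le_or_gt l 0 with hl | hl
          · have : ((fun σ => (σ, l)) ⁻¹' A) = ∅ := by
              ext σ; simp [hA, not_lt.mpr hl]
            rw [this]
            simp [Set.indicator_of_notMem (by simpa using hl : l ∉ Ioi (0:ℝ))]
          · rw [Set.indicator_of_mem (mem_Ioi.mpr hl)]
            have hpre : ((fun σ => (σ, l)) ⁻¹' A) = {σ : ℝ | ENNReal.ofReal l < rearrE G σ} := by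
              ext σ; simp [hA, hl]
            rw [hpre, Measure.restrict_apply (measurableSet_lt measurable_const hRmeas),
              sliceMeas G hs]
        rw [funext this, lintegral_indicator measurableSet_Ioi]

lemma tail_eq (H : ℝ → ℝ≥0∞) (hH : Measurable H) {lam : ℝ≥0∞} (hlam : lam ≠ ∞) :
    ∫⁻ l in Ioi lam.toReal, volume {x : ℝ | ENNReal.ofReal l < H x} =
      ∫⁻ x, (H x - lam) := by
  rw [shiftIoi, layercake (fun x => H x - lam) (hH.sub measurable_const)]
  refine setLIntegral_congr_fun measurableSet_Ioi (fun n hn => ?_)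
  have hn0 : (0:ℝ) ≤ n := (le_of_lt hn)
  have h1 : ENNReal.ofReal (n + lam.toReal) = ENNReal.ofReal n + lam := by
    rw [ENNReal.ofReal_add hn0 ENNReal.toReal_nonneg, ENNReal.ofReal_toReal hlam]
  congr 1
  ext x
  simp only [mem_setOf_eq, h1]
  rw [lt_tsub_iff_right]

lemma claimA (H : ℝ → ℝ≥0∞) (hH : Measurable H) {s : ℝ} (hs : 0 < s)
    {lam : ℝ≥0∞} (hlam : lam ≠ ∞) :
    ∫⁻ σ in Ioo (0:ℝ) s, rearrE H σ ≤
      ENNReal.ofReal s * lam + ∫⁻ x, (H x - lam) := by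
  rw [keyI H hs]
  set c := lam.toReal with hc
  have hc0 : 0 ≤ c := ENNReal.toReal_nonneg
  have hsub : Ioi (0:ℝ) ⊆ Ioo 0 c ∪ Ici c := by
    intro l hl
    rcases lt_or_ge l c with h | h
    · exact Or.inl ⟨hl, h⟩
    · exact Or.inr h
  calc ∫⁻ l in Ioi (0:ℝ), min (ENNReal.ofReal s) (volume {x : ℝ | ENNReal.ofReal l < H x})
      ≤ ∫⁻ l in Ioo (0:ℝ) c ∪ Ici c,
          min (ENNReal.ofReal s) (volume {x : ℝ | ENNReal.ofReal l < H x}) :=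
        lintegral_mono_set hsub
    _ ≤ (∫⁻ l in Ioo (0:ℝ) c, min (ENNReal.ofReal s) (volume {x : ℝ | ENNReal.ofReal l < H x}))
        + ∫⁻ l in Ici c, min (ENNReal.ofReal s) (volume {x : ℝ | ENNReal.ofReal l < H x}) :=
        lintegral_union_le _ _ _
    _ ≤ ENNReal.ofReal s * lam + ∫⁻ x, (H x - lam) := by
        refine add_le_add ?_ ?_
        · calc ∫⁻ l in Ioo (0:ℝ) c, min (ENNReal.ofReal s) (volume {x : ℝ | ENNReal.ofReal l < H x})
              ≤ ∫⁻ _ in Ioo (0:ℝ) c, ENNReal.ofReal s := lintegral_mono fun _ => min_le_left _ _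
            _ = ENNReal.ofReal s * volume (Ioo (0:ℝ) c) := setLIntegral_const _ _
            _ ≤ ENNReal.ofReal s * lam := by
                rw [Real.volume_Ioo, sub_zero]
                exact mul_le_mul_right (by rw [hc]; exact ENNReal.ofReal_toReal_le) _
        · calc ∫⁻ l in Ici c, min (ENNReal.ofReal s) (volume {x : ℝ | ENNReal.ofReal l < H x})
              = ∫⁻ l in Ioi c, min (ENNReal.ofReal s) (volume {x : ℝ | ENNReal.ofReal l < H x}) := by
                rw [← restrict_Ioi_eq_restrict_Ici]
            _ ≤ ∫⁻ l in Ioi c, volume {x : ℝ | ENNReal.ofReal l < H x} :=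
                lintegral_mono fun _ => min_le_right _ _
            _ = ∫⁻ x, (H x - lam) := tail_eq H hH hlam

lemma I_top (G : ℝ → ℝ≥0∞) {s : ℝ} (hs : 0 < s) (h : rearrE G s = ∞) :
    ∫⁻ σ in Ioo (0:ℝ) s, rearrE G σ = ∞ := by
  rw [keyI G hs]
  have : ∀ l : ℝ, 0 < l → min (ENNReal.ofReal s) (volume {x : ℝ | ENNReal.ofReal l < G x})
      = ENNReal.ofReal s := by
    intro l _
    refine min_eq_left ?_
    have : ENNReal.ofReal l < rearrE G s := by
      rw [h]; exact ENNReal.ofReal_lt_top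
    exact (lt_rearrE_iff.mp this).le
  rw [setLIntegral_congr_fun measurableSet_Ioi this]
  rw [setLIntegral_const, Real.volume_Ioi, ENNReal.mul_top (by simp [hs])]

lemma claimB (G : ℝ → ℝ≥0∞) (hG : Measurable G) {s : ℝ} (hs : 0 < s) :
    ENNReal.ofReal s * rearrE G s + ∫⁻ x, (G x - rearrE G s) ≤
      ∫⁻ σ in Ioo (0:ℝ) s, rearrE G σ := by
  set lam := rearrE G s with hlamdef
  rcases eq_or_ne lam ∞ with hlam | hlam
  · rw [I_top G hs hlam]; exact le_top
  set c := lam.toReal with hc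
  have hc0 : 0 ≤ c := ENNReal.toReal_nonneg
  rw [keyI G hs]
  have hdisj : Disjoint (Ioo (0:ℝ) c) (Ioi c) := by
    rw [Set.disjoint_left]
    rintro l ⟨_, h1⟩ h2
    exact absurd h2 (by simp [not_lt.mpr h1.le])
  have hsub : Ioo (0:ℝ) c ∪ Ioi c ⊆ Ioi 0 := by
    rintro l (h | h)
    · exact h.1
    · exact lt_of_le_of_lt hc0 h
  calc ENNReal.ofReal s * lam + ∫⁻ x, (G x - lam)
      = (∫⁻ l in Ioo (0:ℝ) c, min (ENNReal.ofReal s) (volume {x : ℝ | ENNReal.ofReal l < G x}))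
        + ∫⁻ l in Ioi c, min (ENNReal.ofReal s) (volume {x : ℝ | ENNReal.ofReal l < G x}) := by
        congr 1
        · have heq : ∀ l ∈ Ioo (0:ℝ) c,
              min (ENNReal.ofReal s) (volume {x : ℝ | ENNReal.ofReal l < G x})
                = ENNReal.ofReal s := by
            intro l hl
            refine min_eq_left ?_
            have hll : ENNReal.ofReal l < lam :=
              (ENNReal.ofReal_lt_iff_lt_toReal hl.1.le hlam).mpr hl.2
            exact (lt_rearrE_iff.mp hll).le
          rw [setLIntegral_congr_fun measurableSet_Ioo heq, setLIntegral_const,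
            Real.volume_Ioo, sub_zero, hc, ENNReal.ofReal_toReal hlam]
        · have heq : ∀ l ∈ Ioi c,
              min (ENNReal.ofReal s) (volume {x : ℝ | ENNReal.ofReal l < G x})
                = volume {x : ℝ | ENNReal.ofReal l < G x} := by
            intro l hl
            refine min_eq_right ?_
            have h1 : lam ≤ ENNReal.ofReal l := by
              rw [hc] at hl
              calc lam = ENNReal.ofReal lam.toReal := (ENNReal.ofReal_toReal hlam).symm
                _ ≤ ENNReal.ofReal l := ENNReal.ofReal_le_ofReal (le_of_lt hl)
            calc volume {x : ℝ | ENNReal.ofReal l < G x}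
                ≤ volume {x : ℝ | lam < G x} :=
                  measure_mono fun x hx => lt_of_le_of_lt h1 hx
              _ ≤ ENNReal.ofReal s := rearrE_le_iff.mp le_rfl
          rw [setLIntegral_congr_fun measurableSet_Ioi heq]
          exact (tail_eq G hG hlam).symm
    _ = ∫⁻ l in Ioo (0:ℝ) c ∪ Ioi c,
          min (ENNReal.ofReal s) (volume {x : ℝ | ENNReal.ofReal l < G x}) :=
        (lintegral_union measurableSet_Ioi hdisj).symm
    _ ≤ ∫⁻ l in Ioi (0:ℝ), min (ENNReal.ofReal s) (volume {x : ℝ | ENNReal.ofReal l < G x}) :=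
        lintegral_mono_set hsub


lemma core (h₁ h₂ : ℝ → ℝ≥0∞) (H1 : Measurable h₁) (H2 : Measurable h₂) {s : ℝ} (hs : 0 < s) :
    ∫⁻ σ in Ioo (0:ℝ) s, rearrE (fun x => h₁ x + h₂ x) σ ≤
      (∫⁻ σ in Ioo (0:ℝ) s, rearrE h₁ σ) + ∫⁻ σ in Ioo (0:ℝ) s, rearrE h₂ σ := by
  set l₁ := rearrE h₁ s with hl₁
  set l₂ := rearrE h₂ s with hl₂
  rcases eq_or_ne l₁ ∞ with h1 | h1
  · simp [I_top h₁ hs (hl₁ ▸ h1)]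
  rcases eq_or_ne l₂ ∞ with h2 | h2
  · simp [I_top h₂ hs (hl₂ ▸ h2)]
  have hlam : l₁ + l₂ ≠ ∞ := by
    simp [ENNReal.add_eq_top, h1, h2]
  calc ∫⁻ σ in Ioo (0:ℝ) s, rearrE (fun x => h₁ x + h₂ x) σ
      ≤ ENNReal.ofReal s * (l₁ + l₂) + ∫⁻ x, (h₁ x + h₂ x - (l₁ + l₂)) :=
        claimA _ (H1.add H2) hs hlam
    _ ≤ ENNReal.ofReal s * (l₁ + l₂) + ∫⁻ x, ((h₁ x - l₁) + (h₂ x - l₂)) := by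
        refine add_le_add_right (lintegral_mono fun x => ?_) _
        exact add_tsub_add_le_tsub_add_tsub
    _ = (ENNReal.ofReal s * l₁ + ∫⁻ x, (h₁ x - l₁))
        + (ENNReal.ofReal s * l₂ + ∫⁻ x, (h₂ x - l₂)) := by
        rw [lintegral_add_left (by exact H1.sub measurable_const : Measurable fun x => h₁ x - l₁), mul_add]
        ring
    _ ≤ (∫⁻ σ in Ioo (0:ℝ) s, rearrE h₁ σ) + ∫⁻ σ in Ioo (0:ℝ) s, rearrE h₂ σ :=
        add_le_add (claimB h₁ H1 hs) (claimB h₂ H2 hs)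

lemma rearrE_eq_iInf (h : ℝ → ℝ≥0∞) (t : ℝ) :
    rearrE h t = ⨅ (q : ℚ),
      if 0 ≤ (q:ℝ) ∧ volume {x : ℝ | ENNReal.ofReal (q:ℝ) < h x} ≤ ENNReal.ofReal t
      then ENNReal.ofReal (q:ℝ) else ∞ := by
  refine le_antisymm (le_iInf fun q => ?_) ?_
  · split_ifs with hq
    · exact sInf_le hq.2
    · exact le_top
  · rcases eq_or_ne (rearrE h t) ∞ with htop | hfin
    · rw [htop]; exact le_top
    refine ENNReal.le_of_forall_pos_le_add fun ε hε _ => ?_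
    obtain ⟨q, hq1, hq2⟩ := exists_rat_btwn
      (lt_add_of_pos_right (rearrE h t).toReal (by exact_mod_cast hε : (0:ℝ) < ε))
    have hq0 : 0 ≤ (q:ℝ) := le_trans ENNReal.toReal_nonneg hq1.le
    have hle : rearrE h t ≤ ENNReal.ofReal (q:ℝ) := by
      calc rearrE h t = ENNReal.ofReal (rearrE h t).toReal := (ENNReal.ofReal_toReal hfin).symm
        _ ≤ ENNReal.ofReal (q:ℝ) := ENNReal.ofReal_le_ofReal hq1.le
    have hcond : volume {x : ℝ | ENNReal.ofReal (q:ℝ) < h x} ≤ ENNReal.ofReal t := by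
      refine le_trans (measure_mono fun x hx => lt_of_le_of_lt hle hx) ?_
      exact rearrE_le_iff.mp le_rfl
    calc (⨅ (q : ℚ), if 0 ≤ (q:ℝ) ∧ volume {x : ℝ | ENNReal.ofReal (q:ℝ) < h x} ≤ ENNReal.ofReal t
          then ENNReal.ofReal (q:ℝ) else ∞)
        ≤ ENNReal.ofReal (q:ℝ) := by
          refine iInf_le_of_le q ?_
          rw [if_pos ⟨hq0, hcond⟩]
      _ ≤ ENNReal.ofReal ((rearrE h t).toReal + ε) := ENNReal.ofReal_le_ofReal hq2.le
      _ ≤ rearrE h t + ε := by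
          rw [ENNReal.ofReal_add ENNReal.toReal_nonneg ε.coe_nonneg,
            ENNReal.ofReal_toReal hfin, ENNReal.ofReal_coe_nnreal]

lemma measurable_rearrY (f : ℝ × ℝ → ℝ) (hf : Measurable f) :
    Measurable fun p : ℝ × ℝ => rearrE (fun y => ENNReal.ofReal |f (p.1, y)|) p.2 := by
  have : (fun p : ℝ × ℝ => rearrE (fun y => ENNReal.ofReal |f (p.1, y)|) p.2) =
      fun p : ℝ × ℝ => ⨅ (q : ℚ),
        if 0 ≤ (q:ℝ) ∧ volume {y : ℝ | ENNReal.ofReal (q:ℝ) < ENNReal.ofReal |f (p.1, y)|}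
            ≤ ENNReal.ofReal p.2
        then ENNReal.ofReal (q:ℝ) else ∞ := by
    funext p
    exact rearrE_eq_iInf _ _
  rw [this]
  refine Measurable.iInf fun q => ?_
  have hD : Measurable fun x : ℝ =>
      volume {y : ℝ | ENNReal.ofReal (q:ℝ) < ENNReal.ofReal |f (x, y)|} := by
    have hE : MeasurableSet {z : ℝ × ℝ | ENNReal.ofReal (q:ℝ) < ENNReal.ofReal |f z|} :=
      measurableSet_lt measurable_const (ENNReal.measurable_ofReal.comp hf.abs)
    have := measurable_measure_prodMk_left (ν := (volume : Measure ℝ)) hE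
    exact this
  refine Measurable.ite ?_ measurable_const measurable_const
  have h1 : MeasurableSet {p : ℝ × ℝ | 0 ≤ (q:ℝ)} := MeasurableSet.const _
  have h2 : MeasurableSet {p : ℝ × ℝ |
      volume {y : ℝ | ENNReal.ofReal (q:ℝ) < ENNReal.ofReal |f (p.1, y)|}
        ≤ ENNReal.ofReal p.2} :=
    measurableSet_le (hD.comp measurable_fst) (ENNReal.measurable_ofReal.comp measurable_snd)
  exact h1.inter h2
end RK

/-- the operator `f ↦ f**_{yx}` is subadditive. -/
theorem starstarYX_subadditive (f g : ℝ × ℝ → ℝ) (hf : Measurable f) (hg : Measurable g) :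
    ∀ s t : ℝ, 0 < s → 0 < t →
      starstarYX (f + g) s t ≤ starstarYX f s t + starstarYX g s t := by
  intro s t hs ht
  set Φf : ℝ → ℝ≥0∞ := fun x => (ENNReal.ofReal t)⁻¹ * ∫⁻ τ in Ioo (0:ℝ) t, rearrY f x τ
    with hΦfdef
  set Φg : ℝ → ℝ≥0∞ := fun x => (ENNReal.ofReal t)⁻¹ * ∫⁻ τ in Ioo (0:ℝ) t, rearrY g x τ
    with hΦgdef
  set Φfg : ℝ → ℝ≥0∞ :=
    fun x => (ENNReal.ofReal t)⁻¹ * ∫⁻ τ in Ioo (0:ℝ) t, rearrY (f + g) x τ with hΦfgdef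
  -- measurability of the inner averaged rearrangements
  have hjf : Measurable fun p : ℝ × ℝ => rearrY f p.1 p.2 := RK.measurable_rearrY f hf
  have hjg : Measurable fun p : ℝ × ℝ => rearrY g p.1 p.2 := RK.measurable_rearrY g hg
  have hΦf : Measurable Φf :=
    (Measurable.lintegral_prod_right' (f := fun p : ℝ × ℝ => rearrY f p.1 p.2) hjf).const_mul _
  have hΦg : Measurable Φg :=
    (Measurable.lintegral_prod_right' (f := fun p : ℝ × ℝ => rearrY g p.1 p.2) hjg).const_mul _
  -- pointwise subadditivity of the inner averages
  have hpt : ∀ x : ℝ, Φfg x ≤ Φf x + Φg x := by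
    intro x
    have h1 : Measurable fun y : ℝ => ENNReal.ofReal |f (x, y)| :=
      ENNReal.measurable_ofReal.comp ((hf.comp measurable_prodMk_left).abs)
    have h2 : Measurable fun y : ℝ => ENNReal.ofReal |g (x, y)| :=
      ENNReal.measurable_ofReal.comp ((hg.comp measurable_prodMk_left).abs)
    have hmono : ∀ τ : ℝ, rearrY (f + g) x τ ≤
        rearrE (fun y => ENNReal.ofReal |f (x, y)| + ENNReal.ofReal |g (x, y)|) τ := by
      intro τ
      refine RK.rearrE_mono (fun y => ?_) τ
      calc ENNReal.ofReal |(f + g) (x, y)|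
          ≤ ENNReal.ofReal (|f (x, y)| + |g (x, y)|) :=
            ENNReal.ofReal_le_ofReal (abs_add_le _ _)
        _ = ENNReal.ofReal |f (x, y)| + ENNReal.ofReal |g (x, y)| :=
            ENNReal.ofReal_add (abs_nonneg _) (abs_nonneg _)
    calc Φfg x ≤ (ENNReal.ofReal t)⁻¹ *
        ∫⁻ τ in Ioo (0:ℝ) t,
          rearrE (fun y => ENNReal.ofReal |f (x, y)| + ENNReal.ofReal |g (x, y)|) τ :=
        mul_le_mul_right (lintegral_mono fun τ => hmono τ) _
      _ ≤ (ENNReal.ofReal t)⁻¹ *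
          ((∫⁻ τ in Ioo (0:ℝ) t, rearrE (fun y => ENNReal.ofReal |f (x, y)|) τ)
            + ∫⁻ τ in Ioo (0:ℝ) t, rearrE (fun y => ENNReal.ofReal |g (x, y)|) τ) :=
        mul_le_mul_right (RK.core _ _ h1 h2 ht) _
      _ = Φf x + Φg x := by
        rw [mul_add]
        rfl
  -- conclude via outer subadditivity
  have houter : ∫⁻ σ in Ioo (0:ℝ) s, rearrE Φfg σ ≤
      (∫⁻ σ in Ioo (0:ℝ) s, rearrE Φf σ) + ∫⁻ σ in Ioo (0:ℝ) s, rearrE Φg σ := by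
    calc ∫⁻ σ in Ioo (0:ℝ) s, rearrE Φfg σ
        ≤ ∫⁻ σ in Ioo (0:ℝ) s, rearrE (fun x => Φf x + Φg x) σ :=
          lintegral_mono fun σ => RK.rearrE_mono hpt σ
      _ ≤ (∫⁻ σ in Ioo (0:ℝ) s, rearrE Φf σ) + ∫⁻ σ in Ioo (0:ℝ) s, rearrE Φg σ :=
          RK.core Φf Φg hΦf hΦg hs
  calc starstarYX (f + g) s t = (ENNReal.ofReal s)⁻¹ * ∫⁻ σ in Ioo (0:ℝ) s, rearrE Φfg σ := rfl
    _ ≤ (ENNReal.ofReal s)⁻¹ *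
        ((∫⁻ σ in Ioo (0:ℝ) s, rearrE Φf σ) + ∫⁻ σ in Ioo (0:ℝ) s, rearrE Φg σ) :=
        mul_le_mul_right houter _
    _ = starstarYX f s t + starstarYX g s t := by rw [mul_add]; rfl
end

section
/- Let f : ℝ² → ℝ be measurable. Then for all s, t > 0 one has f**_{yx}(s,t) ≤ f**(s,t). -/
open MeasureTheory ENNReal Set

section AuxProof

open scoped Classical

private lemma dist_mono (h : ℝ → ℝ≥0∞) {a b : ℝ≥0∞} (hab : a ≤ b) :
    volume {x : ℝ | b < h x} ≤ volume {x : ℝ | a < h x} :=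
  measure_mono fun x hx => lt_of_le_of_lt hab hx

private lemma exists_rat_lt_dist {h : ℝ → ℝ≥0∞} (hh : Measurable h) {t : ℝ} {l : ℝ≥0∞}
    (hd : ENNReal.ofReal t < volume {x : ℝ | l < h x}) :
    ∃ q : ℚ, l < ENNReal.ofReal q ∧
      ENNReal.ofReal t < volume {x : ℝ | ENNReal.ofReal q < h x} := by
  set A : ℚ → Set ℝ := fun q =>
    if l < ENNReal.ofReal q then {x : ℝ | ENNReal.ofReal q < h x} else ∅ with hA
  have hUnion : {x : ℝ | l < h x} = ⋃ q : ℚ, A q := by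
    ext x
    simp only [mem_iUnion, mem_setOf_eq, hA]
    constructor
    · intro hx
      have hlT : l ≠ ∞ := hx.ne_top
      by_cases hxT : h x = ∞
      · obtain ⟨q, hq⟩ := exists_rat_gt l.toReal
        have hlq : l < ENNReal.ofReal q := (ENNReal.lt_ofReal_iff_toReal_lt hlT).2 hq
        exact ⟨q, by rw [if_pos hlq]; simp [hxT]⟩
      · have h1 : l.toReal < (h x).toReal := (ENNReal.toReal_lt_toReal hlT hxT).2 hx
        obtain ⟨q, hq1, hq2⟩ := exists_rat_btwn h1
        have hlq : l < ENNReal.ofReal q := (ENNReal.lt_ofReal_iff_toReal_lt hlT).2 hq1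
        have hq0 : (0:ℝ) ≤ (q:ℝ) := le_trans ENNReal.toReal_nonneg hq1.le
        have hqx : ENNReal.ofReal q < h x :=
          (ENNReal.ofReal_lt_iff_lt_toReal hq0 hxT).2 hq2
        exact ⟨q, by rw [if_pos hlq]; exact hqx⟩
    · rintro ⟨q, hq⟩
      by_cases hlq : l < ENNReal.ofReal q
      · rw [if_pos hlq] at hq; exact lt_trans hlq hq
      · rw [if_neg hlq] at hq; exact absurd hq (notMem_empty x)
  have hAempty : ∀ p : ℚ, ¬ l < ENNReal.ofReal (p:ℝ) → A p = ∅ := by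
    intro p hp; simp [hA, if_neg hp]
  have hAsub : ∀ p q : ℚ, p ≤ q → l < ENNReal.ofReal (p:ℝ) → A q ⊆ A p := by
    intro p q hpq hp x hx
    by_cases hq : l < ENNReal.ofReal (q:ℝ)
    · simp only [hA, if_pos hq] at hx
      simp only [hA, if_pos hp]
      exact lt_of_le_of_lt (ENNReal.ofReal_le_ofReal (by exact_mod_cast hpq)) hx
    · rw [hAempty q hq] at hx; exact absurd hx (notMem_empty x)
  have hdir : Directed (· ⊆ ·) A := by
    intro p q
    rcases le_total p q with hpq | hpq
    · by_cases hp : l < ENNReal.ofReal (p:ℝ)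
      · exact ⟨p, subset_rfl, hAsub p q hpq hp⟩
      · exact ⟨q, by rw [hAempty p hp]; exact empty_subset _, subset_rfl⟩
    · by_cases hq : l < ENNReal.ofReal (q:ℝ)
      · exact ⟨q, hAsub q p hpq hq, subset_rfl⟩
      · exact ⟨p, subset_rfl, by rw [hAempty q hq]; exact empty_subset _⟩
  rw [hUnion, Directed.measure_iUnion hdir] at hd
  obtain ⟨q, hq⟩ := lt_iSup_iff.1 hd
  by_cases hlq : l < ENNReal.ofReal (q:ℝ)
  · refine ⟨q, hlq, ?_⟩
    simpa only [hA, if_pos hlq] using hq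
  · simp only [hA, if_neg hlq] at hq
    simp at hq

private lemma lt_rearrE_iff {h : ℝ → ℝ≥0∞} (hh : Measurable h) (t : ℝ) (l : ℝ≥0∞) :
    l < rearrE h t ↔ ENNReal.ofReal t < volume {x : ℝ | l < h x} := by
  constructor
  · intro hl
    by_contra hcon
    push_neg at hcon
    exact absurd (sInf_le (show l ∈ {σ : ℝ≥0∞ | volume {x : ℝ | σ < h x} ≤ ENNReal.ofReal t}
      from hcon)) (not_le.2 hl)
  · intro hd
    obtain ⟨q, hlq, hq⟩ := exists_rat_lt_dist hh hd
    refine lt_of_lt_of_le hlq (le_sInf fun b hb => ?_)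
    by_contra hbq
    push_neg at hbq
    exact absurd hb (not_le.2 (lt_of_lt_of_le hq (dist_mono h hbq.le)))

private lemma rearrE_antitone (h : ℝ → ℝ≥0∞) : Antitone (rearrE h) := fun s t hst =>
  sInf_le_sInf fun b hb => le_trans hb (ENNReal.ofReal_le_ofReal hst)

private lemma rearrE_measurable (h : ℝ → ℝ≥0∞) : Measurable (rearrE h) :=
  (rearrE_antitone h).measurable

private lemma rearrE_eq_iSup {h : ℝ → ℝ≥0∞} (hh : Measurable h) (t : ℝ) :
    rearrE h t = ⨆ q : ℚ, if ENNReal.ofReal t < volume {x : ℝ | ENNReal.ofReal q < h x}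
      then ENNReal.ofReal q else 0 := by
  apply le_antisymm
  · refine le_of_forall_lt fun c hc => ?_
    obtain ⟨q, hcq, hq⟩ := exists_rat_lt_dist hh ((lt_rearrE_iff hh t c).1 hc)
    calc c < ENNReal.ofReal q := hcq
    _ = if ENNReal.ofReal t < volume {x : ℝ | ENNReal.ofReal q < h x}
        then ENNReal.ofReal q else 0 := (if_pos hq).symm
    _ ≤ _ := le_iSup (fun q : ℚ => if ENNReal.ofReal t < volume {x : ℝ | ENNReal.ofReal q < h x}
        then ENNReal.ofReal q else 0) q
  · refine iSup_le fun q => ?_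
    split_ifs with hq
    · exact ((lt_rearrE_iff hh t _).2 hq).le
    · exact zero_le

/-- layer cake for `ℝ≥0∞`-valued functions. -/
private lemma layercake {α : Type*} [MeasurableSpace α] (μ : Measure α) [SigmaFinite μ]
    {h : α → ℝ≥0∞} (hh : Measurable h) :
    ∫⁻ x, h x ∂μ = ∫⁻ l in Ioi (0:ℝ), μ {x | ENNReal.ofReal l < h x} := by
  have key : ∀ c : ℝ≥0∞,
      ∫⁻ l in Ioi (0:ℝ), (if ENNReal.ofReal l < c then (1:ℝ≥0∞) else 0) = c := by
    intro c
    have hmeas : MeasurableSet {l : ℝ | ENNReal.ofReal l < c} :=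
      measurableSet_lt ENNReal.measurable_ofReal measurable_const
    have h1 : ∫⁻ l in Ioi (0:ℝ), (if ENNReal.ofReal l < c then (1:ℝ≥0∞) else 0)
        = ∫⁻ l in Ioi (0:ℝ), {l : ℝ | ENNReal.ofReal l < c}.indicator 1 l := by
      apply lintegral_congr; intro l
      by_cases hl : ENNReal.ofReal l < c <;> simp [hl, indicator]
    rw [h1, lintegral_indicator hmeas, Measure.restrict_restrict hmeas]
    simp only [Pi.one_apply]
    rw [setLIntegral_one]
    by_cases hc : c = ∞
    · have h2 : {l : ℝ | ENNReal.ofReal l < c} ∩ Ioi 0 = Ioi (0:ℝ) := by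
        ext l
        simp only [mem_inter_iff, mem_setOf_eq, mem_Ioi, hc]
        exact ⟨fun h' => h'.2, fun h' => ⟨ENNReal.ofReal_lt_top, h'⟩⟩
      rw [h2, Real.volume_Ioi, hc]
    · have h2 : {l : ℝ | ENNReal.ofReal l < c} ∩ Ioi 0 = Ioo (0:ℝ) c.toReal := by
        ext l
        simp only [mem_inter_iff, mem_setOf_eq, mem_Ioi, mem_Ioo]
        constructor
        · rintro ⟨ha, hb⟩
          exact ⟨hb, (ENNReal.ofReal_lt_iff_lt_toReal hb.le hc).1 ha⟩
        · rintro ⟨ha, hb⟩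
          exact ⟨(ENNReal.ofReal_lt_iff_lt_toReal ha.le hc).2 hb, ha⟩
      rw [h2, Real.volume_Ioo, sub_zero, ENNReal.ofReal_toReal hc]
  have hu : Measurable (Function.uncurry
      (fun (l : ℝ) (x : α) => if ENNReal.ofReal l < h x then (1:ℝ≥0∞) else 0)) := by
    have hs : MeasurableSet {p : ℝ × α | ENNReal.ofReal p.1 < h p.2} :=
      measurableSet_lt (ENNReal.measurable_ofReal.comp measurable_fst) (hh.comp measurable_snd)
    exact Measurable.ite hs measurable_const measurable_const
  have hswap := lintegral_lintegral_swap (μ := volume.restrict (Ioi (0:ℝ))) (ν := μ)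
    (f := fun l x => if ENNReal.ofReal l < h x then (1:ℝ≥0∞) else 0) hu.aemeasurable
  calc ∫⁻ x, h x ∂μ
      = ∫⁻ x, (∫⁻ l in Ioi (0:ℝ), (if ENNReal.ofReal l < h x then (1:ℝ≥0∞) else 0)) ∂μ := by
        apply lintegral_congr; intro x; rw [key (h x)]
    _ = ∫⁻ l in Ioi (0:ℝ), ∫⁻ x, (if ENNReal.ofReal l < h x then (1:ℝ≥0∞) else 0) ∂μ :=
        hswap.symm
    _ = ∫⁻ l in Ioi (0:ℝ), μ {x | ENNReal.ofReal l < h x} := by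
        apply lintegral_congr; intro l
        have hm2 : MeasurableSet {x | ENNReal.ofReal l < h x} :=
          measurableSet_lt measurable_const hh
        rw [← lintegral_indicator_one hm2]
        apply lintegral_congr; intro x
        by_cases hx : ENNReal.ofReal l < h x <;> simp [hx, indicator]

/-- equimeasurability: `∫_0^s h* = ∫_0^∞ min(s, d_h(λ)) dλ`. -/
private lemma lintegral_rearrE_eq {h : ℝ → ℝ≥0∞} (hh : Measurable h) {s : ℝ} (hs : 0 < s) :
    ∫⁻ σ in Ioo (0:ℝ) s, rearrE h σ
      = ∫⁻ l in Ioi (0:ℝ), min (ENNReal.ofReal s) (volume {x : ℝ | ENNReal.ofReal l < h x}) := by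
  rw [layercake (volume.restrict (Ioo (0:ℝ) s)) (rearrE_measurable h)]
  apply lintegral_congr; intro l
  have hm : MeasurableSet {σ : ℝ | ENNReal.ofReal l < rearrE h σ} :=
    measurableSet_lt measurable_const (rearrE_measurable h)
  rw [Measure.restrict_apply hm]
  set D := volume {x : ℝ | ENNReal.ofReal l < h x} with hD
  have hset : {σ : ℝ | ENNReal.ofReal l < rearrE h σ} = {σ : ℝ | ENNReal.ofReal σ < D} := by
    ext σ; exact lt_rearrE_iff hh σ (ENNReal.ofReal l)
  rw [hset]
  by_cases hcase : ENNReal.ofReal s ≤ D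
  · have h2 : {σ : ℝ | ENNReal.ofReal σ < D} ∩ Ioo 0 s = Ioo (0:ℝ) s := by
      apply inter_eq_self_of_subset_right
      intro σ hσ
      exact lt_of_lt_of_le ((ENNReal.ofReal_lt_ofReal_iff hs).2 hσ.2) hcase
    rw [h2, Real.volume_Ioo, sub_zero, min_eq_left hcase]
  · push_neg at hcase
    have hDT : D ≠ ∞ := ne_top_of_lt hcase
    have hDs : D.toReal < s := by
      have := (ENNReal.ofReal_lt_iff_lt_toReal (le_of_lt hs) hDT)
      -- D < ofReal s means toReal D < s
      exact (ENNReal.lt_ofReal_iff_toReal_lt hDT).1 hcase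
    have h2 : {σ : ℝ | ENNReal.ofReal σ < D} ∩ Ioo 0 s = Ioo (0:ℝ) D.toReal := by
      ext σ
      simp only [mem_inter_iff, mem_setOf_eq, mem_Ioo]
      constructor
      · rintro ⟨ha, hb, _⟩
        exact ⟨hb, (ENNReal.ofReal_lt_iff_lt_toReal hb.le hDT).1 ha⟩
      · rintro ⟨ha, hb⟩
        exact ⟨(ENNReal.ofReal_lt_iff_lt_toReal ha.le hDT).2 hb, ha, lt_trans hb hDs⟩
    rw [h2, Real.volume_Ioo, sub_zero, ENNReal.ofReal_toReal hDT, min_eq_right hcase.le]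

/-- translated layer cake: `∫_a^∞ d_h(λ) dλ = ∫ (h - a)`. -/
private lemma lintegral_Ioi_dist {α : Type*} [MeasurableSpace α] (μ : Measure α) [SigmaFinite μ]
    {h : α → ℝ≥0∞} (hh : Measurable h) {a : ℝ} (ha : 0 ≤ a) :
    ∫⁻ l in Ioi a, μ {x | ENNReal.ofReal l < h x}
      = ∫⁻ x, (h x - ENNReal.ofReal a) ∂μ := by
  have hsub : Measurable fun x => h x - ENNReal.ofReal a := hh.sub measurable_const
  rw [layercake μ hsub]
  set G : ℝ → ℝ≥0∞ := fun l => μ {x | ENNReal.ofReal l < h x} with hG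
  have step1 : ∫⁻ l in Ioi a, G l = ∫⁻ l in Ioi (0:ℝ), G (l + a) := by
    rw [← lintegral_indicator measurableSet_Ioi, ← lintegral_indicator measurableSet_Ioi]
    rw [← lintegral_add_right_eq_self (fun l => (Ioi a).indicator G l) a]
    apply lintegral_congr; intro l
    by_cases hl : l ∈ Ioi (0:ℝ)
    · have : l + a ∈ Ioi a := by simp only [mem_Ioi] at hl ⊢; linarith
      rw [indicator_of_mem this, indicator_of_mem hl]
    · have : l + a ∉ Ioi a := by simp only [mem_Ioi] at hl ⊢; intro hc; apply hl; linarith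
      rw [indicator_of_notMem this, indicator_of_notMem hl]
  rw [step1]
  apply setLIntegral_congr_fun measurableSet_Ioi
  intro l hl
  have hset : {x | ENNReal.ofReal (l + a) < h x} = {x | ENNReal.ofReal l < h x - ENNReal.ofReal a} := by
    ext x
    simp only [mem_setOf_eq]
    rw [lt_tsub_iff_left, ← ENNReal.ofReal_add ha (le_of_lt hl), add_comm a l]
  rw [hG]; simp only []
  rw [hset]

/-- K-functional upper bound: `∫_0^s h* ≤ C s + ∫ (h - C)`. -/
private lemma lintegral_rearrE_le {h : ℝ → ℝ≥0∞} (hh : Measurable h) {s : ℝ} (hs : 0 < s)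
    (C : ℝ≥0∞) :
    ∫⁻ σ in Ioo (0:ℝ) s, rearrE h σ
      ≤ C * ENNReal.ofReal s + ∫⁻ x, (h x - C) := by
  by_cases hC : C = ∞
  · rw [hC, ENNReal.top_mul (ENNReal.ofReal_pos.2 hs).ne']
    exact le_top.trans (le_add_right le_rfl)
  rw [lintegral_rearrE_eq hh hs]
  set c := C.toReal with hc
  have hc0 : 0 ≤ c := ENNReal.toReal_nonneg
  have hsplit : Ioc (0:ℝ) c ∪ Ioi c = Ioi (0:ℝ) := Ioc_union_Ioi_eq_Ioi hc0
  rw [← hsplit, lintegral_union measurableSet_Ioi (Ioc_disjoint_Ioi le_rfl)]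
  refine add_le_add ?_ ?_
  · calc ∫⁻ l in Ioc (0:ℝ) c, min (ENNReal.ofReal s) (volume {x : ℝ | ENNReal.ofReal l < h x})
        ≤ ∫⁻ _ in Ioc (0:ℝ) c, ENNReal.ofReal s := lintegral_mono fun l => min_le_left _ _
      _ = ENNReal.ofReal s * volume (Ioc (0:ℝ) c) := setLIntegral_const _ _
      _ = C * ENNReal.ofReal s := by
          rw [Real.volume_Ioc, sub_zero, hc, ENNReal.ofReal_toReal hC, mul_comm]
  · calc ∫⁻ l in Ioi c, min (ENNReal.ofReal s) (volume {x : ℝ | ENNReal.ofReal l < h x})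
        ≤ ∫⁻ l in Ioi c, volume {x : ℝ | ENNReal.ofReal l < h x} :=
          lintegral_mono fun l => min_le_right _ _
      _ = ∫⁻ x, (h x - ENNReal.ofReal c) := lintegral_Ioi_dist volume hh hc0
      _ = ∫⁻ x, (h x - C) := by rw [hc, ENNReal.ofReal_toReal hC]

/-- K-functional lower bound with the optimal constant `λ₀ = h*(s)`. -/
private lemma le_lintegral_rearrE {h : ℝ → ℝ≥0∞} (hh : Measurable h) {s : ℝ} (hs : 0 < s) :
    rearrE h s * ENNReal.ofReal s + ∫⁻ x, (h x - rearrE h s)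
      ≤ ∫⁻ σ in Ioo (0:ℝ) s, rearrE h σ := by
  set l0 := rearrE h s with hl0
  rw [lintegral_rearrE_eq hh hs]
  by_cases hT : l0 = ∞
  · -- RHS is infinite
    have : ∫⁻ l in Ioi (0:ℝ), min (ENNReal.ofReal s) (volume {x : ℝ | ENNReal.ofReal l < h x})
        = ∞ := by
      have hmin : ∀ l ∈ Ioi (0:ℝ),
          min (ENNReal.ofReal s) (volume {x : ℝ | ENNReal.ofReal l < h x})
            = ENNReal.ofReal s := by
        intro l _
        refine min_eq_left ?_
        have : ENNReal.ofReal l < l0 := by rw [hT]; exact ENNReal.ofReal_lt_top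
        exact ((lt_rearrE_iff hh s _).1 this).le
      rw [setLIntegral_congr_fun measurableSet_Ioi hmin,
        setLIntegral_const, Real.volume_Ioi, ENNReal.mul_top (ENNReal.ofReal_pos.2 hs).ne']
    rw [this]; exact le_top
  · have ha0 : (0:ℝ) ≤ l0.toReal := ENNReal.toReal_nonneg
    have hofa : ENNReal.ofReal l0.toReal = l0 := ENNReal.ofReal_toReal hT
    have hIci : ∫⁻ l in Ici l0.toReal,
        min (ENNReal.ofReal s) (volume {x : ℝ | ENNReal.ofReal l < h x})
          = ∫⁻ x, (h x - l0) := by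
      have hcong : ∀ l ∈ Ici l0.toReal,
          min (ENNReal.ofReal s) (volume {x : ℝ | ENNReal.ofReal l < h x})
            = volume {x : ℝ | ENNReal.ofReal l < h x} := by
        intro l hl
        refine min_eq_right ?_
        by_contra hcon
        push_neg at hcon
        have h1 : ENNReal.ofReal l < l0 := (lt_rearrE_iff hh s _).2 hcon
        have h2 : l0 ≤ ENNReal.ofReal l := by
          rw [← hofa]
          exact ENNReal.ofReal_le_ofReal hl
        exact absurd h1 (not_lt.2 h2)
      rw [setLIntegral_congr_fun measurableSet_Ici hcong,
        ← Measure.restrict_congr_set (Ioi_ae_eq_Ici (a := l0.toReal)),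
        lintegral_Ioi_dist volume hh ha0, hofa]
    rcases eq_or_lt_of_le (zero_le : 0 ≤ l0) with h0 | h0
    · -- l0 = 0
      have hcong : ∀ l ∈ Ioi (0:ℝ),
          min (ENNReal.ofReal s) (volume {x : ℝ | ENNReal.ofReal l < h x})
            = volume {x : ℝ | ENNReal.ofReal l < h x} := by
        intro l _
        refine min_eq_right ?_
        by_contra hcon
        push_neg at hcon
        have h1 : ENNReal.ofReal l < l0 := (lt_rearrE_iff hh s _).2 hcon
        rw [← h0] at h1
        simp at h1
      rw [setLIntegral_congr_fun measurableSet_Ioi hcong,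
        lintegral_Ioi_dist volume hh le_rfl]
      rw [← h0]
      simp
    · -- 0 < l0
      have ht0 : 0 < l0.toReal := ENNReal.toReal_pos (ne_of_gt h0) hT
      have hsplit : Ioo (0:ℝ) l0.toReal ∪ Ici l0.toReal = Ioi (0:ℝ) :=
        Ioo_union_Ici_eq_Ioi ht0
      have hdisj : Disjoint (Ioo (0:ℝ) l0.toReal) (Ici l0.toReal) := by
        rw [Set.disjoint_left]
        rintro l ⟨_, hl2⟩ hl3
        exact absurd hl3 (not_le.2 hl2)
      rw [← hsplit, lintegral_union measurableSet_Ici hdisj, hIci]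
      gcongr
      have hcong : ∀ l ∈ Ioo (0:ℝ) l0.toReal,
          min (ENNReal.ofReal s) (volume {x : ℝ | ENNReal.ofReal l < h x})
            = ENNReal.ofReal s := by
        intro l hl
        refine min_eq_left ?_
        have h1 : ENNReal.ofReal l < l0 := by
          rw [← hofa]
          exact ENNReal.ofReal_lt_ofReal_iff_of_nonneg hl.1.le |>.2 hl.2
        exact ((lt_rearrE_iff hh s _).1 h1).le
      rw [setLIntegral_congr_fun measurableSet_Ioo hcong,
        setLIntegral_const, Real.volume_Ioo, sub_zero, hofa, mul_comm]

/-- scaling: `(c·h)* = c·h*`. -/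
private lemma rearrE_const_mul {h : ℝ → ℝ≥0∞} (hh : Measurable h) {c : ℝ≥0∞}
    (hc0 : c ≠ 0) (hcT : c ≠ ∞) (u : ℝ) :
    rearrE (fun x => c * h x) u = c * rearrE h u := by
  refine eq_of_forall_lt_iff fun l => ?_
  rw [lt_rearrE_iff (hh.const_mul c) u l]
  have hset : {x : ℝ | l < c * h x} = {x : ℝ | l / c < h x} := by
    ext x
    simp only [mem_setOf_eq]
    rw [ENNReal.div_lt_iff (Or.inl hc0) (Or.inl hcT), mul_comm]
  rw [hset, ← lt_rearrE_iff hh u (l / c),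
    ENNReal.div_lt_iff (Or.inl hc0) (Or.inl hcT), mul_comm]

end AuxProof

set_option maxHeartbeats 1000000 in
/-- `f**_{yx}(s,t) ≤ f**(s,t)`. -/
theorem starstarYX_le_starstar (f : ℝ × ℝ → ℝ) (hf : Measurable f) :
    ∀ s t : ℝ, 0 < s → 0 < t → starstarYX f s t ≤ starstar f s t := by
  classical
  intro s t hs ht
  -- joint measurability of `(x, τ) ↦ f*_y(x, τ)`
  have hM1 : Measurable fun p : ℝ × ℝ => rearrY f p.1 p.2 := by
    have hrepr : (fun p : ℝ × ℝ => rearrY f p.1 p.2) = fun p : ℝ × ℝ =>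
        ⨆ q : ℚ, if ENNReal.ofReal p.2
            < volume {y : ℝ | ENNReal.ofReal (q:ℝ) < ENNReal.ofReal |f (p.1, y)|}
          then ENNReal.ofReal (q:ℝ) else 0 := by
      funext p
      exact rearrE_eq_iSup
        (((hf.comp measurable_prodMk_left).abs).ennreal_ofReal) p.2
    rw [hrepr]
    refine Measurable.iSup fun q => ?_
    have hSq : MeasurableSet {z : ℝ × ℝ | ENNReal.ofReal (q:ℝ) < ENNReal.ofReal |f z|} :=
      measurableSet_lt measurable_const (hf.abs.ennreal_ofReal)
    have hV : Measurable fun x : ℝ =>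
        volume {y : ℝ | ENNReal.ofReal (q:ℝ) < ENNReal.ofReal |f (x, y)|} :=
      measurable_measure_prodMk_left hSq
    refine Measurable.ite ?_ measurable_const measurable_const
    exact measurableSet_lt (ENNReal.measurable_ofReal.comp measurable_snd)
      (hV.comp measurable_fst)
  -- joint measurability of `(σ, τ) ↦ f*_yx(σ, τ)`
  have hM3 : Measurable fun p : ℝ × ℝ => rearrYX f p.1 p.2 := by
    have hrepr : (fun p : ℝ × ℝ => rearrYX f p.1 p.2) = fun p : ℝ × ℝ =>
        ⨆ q : ℚ, if ENNReal.ofReal p.1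
            < volume {x : ℝ | ENNReal.ofReal (q:ℝ) < rearrY f x p.2}
          then ENNReal.ofReal (q:ℝ) else 0 := by
      funext p
      exact rearrE_eq_iSup (hM1.comp (measurable_id.prodMk measurable_const)) p.1
    rw [hrepr]
    refine Measurable.iSup fun q => ?_
    have hSq : MeasurableSet {z : ℝ × ℝ | ENNReal.ofReal (q:ℝ) < rearrY f z.1 z.2} :=
      measurableSet_lt measurable_const hM1
    have hW : Measurable fun τ : ℝ =>
        volume {x : ℝ | ENNReal.ofReal (q:ℝ) < rearrY f x τ} :=
      measurable_measure_prodMk_right hSq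
    refine Measurable.ite ?_ measurable_const measurable_const
    exact measurableSet_lt (ENNReal.measurable_ofReal.comp measurable_fst)
      (hW.comp measurable_snd)
  have hc : Measurable fun τ : ℝ => rearrYX f s τ := by
    have h' : (fun τ : ℝ => rearrYX f s τ)
        = (fun p : ℝ × ℝ => rearrYX f p.1 p.2) ∘ (fun τ : ℝ => ((s, τ) : ℝ × ℝ)) := rfl
    rw [h']
    exact hM3.comp (measurable_const.prodMk measurable_id)
  have hH : Measurable fun x : ℝ => ∫⁻ τ in Ioo (0:ℝ) t, rearrY f x τ :=
    Measurable.lintegral_prod_right' (ν := volume.restrict (Ioo (0:ℝ) t))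
      (f := fun p : ℝ × ℝ => rearrY f p.1 p.2) hM1
  have hi0 : ((ENNReal.ofReal t)⁻¹ : ℝ≥0∞) ≠ 0 := ENNReal.inv_ne_zero.2 ENNReal.ofReal_ne_top
  have hiT : ((ENNReal.ofReal t)⁻¹ : ℝ≥0∞) ≠ ∞ :=
    ENNReal.inv_ne_top.2 (ENNReal.ofReal_pos.2 ht).ne'
  -- rewrite the left-hand side
  have e1 : starstarYX f s t = (ENNReal.ofReal s)⁻¹ * ((ENNReal.ofReal t)⁻¹ *
      ∫⁻ σ in Ioo (0:ℝ) s, rearrE (fun x => ∫⁻ τ in Ioo (0:ℝ) t, rearrY f x τ) σ) := by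
    rw [starstarYX]
    congr 1
    calc ∫⁻ σ in Ioo (0:ℝ) s,
          rearrE (fun x => (ENNReal.ofReal t)⁻¹ * ∫⁻ τ in Ioo (0:ℝ) t, rearrY f x τ) σ
        = ∫⁻ σ in Ioo (0:ℝ) s, (ENNReal.ofReal t)⁻¹ *
            rearrE (fun x => ∫⁻ τ in Ioo (0:ℝ) t, rearrY f x τ) σ :=
          lintegral_congr fun σ => rearrE_const_mul hH hi0 hiT σ
      _ = (ENNReal.ofReal t)⁻¹ *
            ∫⁻ σ in Ioo (0:ℝ) s, rearrE (fun x => ∫⁻ τ in Ioo (0:ℝ) t, rearrY f x τ) σ :=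
          lintegral_const_mul' _ _ hiT
  -- rewrite the right-hand side
  have e2 : starstar f s t = (ENNReal.ofReal s)⁻¹ * ((ENNReal.ofReal t)⁻¹ *
      ∫⁻ τ in Ioo (0:ℝ) t, ∫⁻ σ in Ioo (0:ℝ) s, rearrYX f σ τ) := by
    rw [starstar]
    have hsw := lintegral_lintegral_swap (μ := volume.restrict (Ioo (0:ℝ) s))
      (ν := volume.restrict (Ioo (0:ℝ) t)) (f := fun σ τ => rearrYX f σ τ) hM3.aemeasurable
    rw [hsw, ENNReal.ofReal_mul hs.le,
      ENNReal.mul_inv (Or.inl (ENNReal.ofReal_pos.2 hs).ne') (Or.inl ENNReal.ofReal_ne_top),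
      mul_assoc]
  -- the key inequality
  have key : (∫⁻ σ in Ioo (0:ℝ) s, rearrE (fun x => ∫⁻ τ in Ioo (0:ℝ) t, rearrY f x τ) σ)
      ≤ ∫⁻ τ in Ioo (0:ℝ) t, ∫⁻ σ in Ioo (0:ℝ) s, rearrYX f σ τ := by
    have hswapkey := lintegral_lintegral_swap (μ := (volume : Measure ℝ))
      (ν := volume.restrict (Ioo (0:ℝ) t))
      (f := fun x τ => rearrY f x τ - rearrYX f s τ)
      (by
        refine Measurable.aemeasurable ?_
        have h' : (Function.uncurry fun (x τ : ℝ) => rearrY f x τ - rearrYX f s τ)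
            = fun p : ℝ × ℝ => rearrY f p.1 p.2
                - ((fun τ : ℝ => rearrYX f s τ) ∘ (fun p : ℝ × ℝ => p.2)) p := rfl
        rw [h']
        exact hM1.sub (hc.comp measurable_snd))
    calc ∫⁻ σ in Ioo (0:ℝ) s, rearrE (fun x => ∫⁻ τ in Ioo (0:ℝ) t, rearrY f x τ) σ
        ≤ (∫⁻ τ in Ioo (0:ℝ) t, rearrYX f s τ) * ENNReal.ofReal s
            + ∫⁻ x, ((∫⁻ τ in Ioo (0:ℝ) t, rearrY f x τ)
                - ∫⁻ τ in Ioo (0:ℝ) t, rearrYX f s τ) :=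
          lintegral_rearrE_le hH hs _
      _ ≤ (∫⁻ τ in Ioo (0:ℝ) t, rearrYX f s τ) * ENNReal.ofReal s
            + ∫⁻ x, ∫⁻ τ in Ioo (0:ℝ) t, (rearrY f x τ - rearrYX f s τ) := by
          refine add_le_add le_rfl (lintegral_mono fun x => ?_)
          rw [tsub_le_iff_right]
          calc (∫⁻ τ in Ioo (0:ℝ) t, rearrY f x τ)
              ≤ ∫⁻ τ in Ioo (0:ℝ) t, ((rearrY f x τ - rearrYX f s τ) + rearrYX f s τ) :=
                lintegral_mono fun τ => le_tsub_add
            _ = (∫⁻ τ in Ioo (0:ℝ) t, (rearrY f x τ - rearrYX f s τ))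
                + ∫⁻ τ in Ioo (0:ℝ) t, rearrYX f s τ :=
                lintegral_add_right' _ hc.aemeasurable
      _ = (∫⁻ τ in Ioo (0:ℝ) t, rearrYX f s τ) * ENNReal.ofReal s
            + ∫⁻ τ in Ioo (0:ℝ) t, ∫⁻ x, (rearrY f x τ - rearrYX f s τ) := by
          rw [hswapkey]
      _ = ∫⁻ τ in Ioo (0:ℝ) t, (rearrYX f s τ * ENNReal.ofReal s
            + ∫⁻ x, (rearrY f x τ - rearrYX f s τ)) := by
          rw [lintegral_add_left' ((hc.mul_const (ENNReal.ofReal s)).aemeasurable),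
            lintegral_mul_const' (ENNReal.ofReal s) _ ENNReal.ofReal_ne_top]
      _ ≤ ∫⁻ τ in Ioo (0:ℝ) t, ∫⁻ σ in Ioo (0:ℝ) s, rearrYX f σ τ := by
          refine lintegral_mono fun τ => ?_
          exact le_lintegral_rearrE (hM1.comp (measurable_id.prodMk measurable_const)) hs
  rw [e1, e2]
  exact mul_le_mul_right (mul_le_mul_right key _) _
end

section
/- Let 0 < p < ∞, u = χ_{[0,1]} and v ≡ 1. Then there exists a measurable function f : ℝ² → ℝ (namely f(x,y) = (1+k)^{-1/p} for k ≤ x < k+1, 0 < y < k+1, k = 0,1,2,..., and f = 0 otherwise) such that ‖f‖_{Λ^p(u)[Λ^p(v)]} = 1 while ‖f‖_{Λ₂^p(uv)} = ∞. In particular, Λ^p(u)[Λ^p(v)] is not contained in Λ₂^p(uv). -/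
open MeasureTheory ENNReal Set

noncomputable section Helpers

open MeasureTheory ENNReal Set

/-- The counterexample function: `f(x,y) = (1+x)^(-1/p)` for `0 < x`, `0 < y < 1+x`. -/
def F10 (p : ℝ) : ℝ × ℝ → ℝ := fun z =>
  if 0 < z.1 ∧ 0 < z.2 ∧ z.2 < 1 + z.1 then (1 + z.1) ^ (-1/p) else 0

lemma F10_meas (p : ℝ) : Measurable (F10 p) := by
  unfold F10
  refine Measurable.ite ?_ ?_ measurable_const
  · exact (measurableSet_lt measurable_const measurable_fst).inter
      ((measurableSet_lt measurable_const measurable_snd).inter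
        (measurableSet_lt measurable_snd (measurable_const.add measurable_fst)))
  · exact (measurable_const.add measurable_fst).pow measurable_const

lemma rearrY_F10 {p : ℝ} (x t : ℝ) :
    rearrY (F10 p) x t =
      if 0 < x ∧ t < 1 + x then ENNReal.ofReal ((1 + x) ^ (-1/p)) else 0 := by
  have hfx : ∀ y : ℝ, F10 p (x, y) =
      if 0 < x ∧ 0 < y ∧ y < 1 + x then (1 + x) ^ (-1/p) else 0 := fun y => rfl
  unfold rearrY rearr rearrE
  simp only [hfx]
  by_cases hx : 0 < x
  · have h1x : (0:ℝ) < 1 + x := by linarith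
    have hc : 0 < (1 + x) ^ (-1/p) := Real.rpow_pos_of_pos h1x _
    have hsets : ∀ σ : ℝ≥0∞,
        {y : ℝ | σ < ENNReal.ofReal |if 0 < x ∧ 0 < y ∧ y < 1 + x then (1+x) ^ (-1/p) else 0|}
          = if σ < ENNReal.ofReal ((1+x) ^ (-1/p)) then Ioo 0 (1+x) else ∅ := by
      intro σ; ext y
      by_cases hy : 0 < y ∧ y < 1 + x
      · rw [mem_setOf_eq, if_pos ⟨hx, hy.1, hy.2⟩, abs_of_nonneg hc.le]
        by_cases hσ : σ < ENNReal.ofReal ((1+x) ^ (-1/p))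
        · simp [hσ, hy.1, hy.2]
        · simp [hσ]
      · rw [mem_setOf_eq, if_neg (fun h => hy ⟨h.2.1, h.2.2⟩), abs_zero, ENNReal.ofReal_zero]
        simp only [ENNReal.not_lt_zero, false_iff]
        intro hmem
        split at hmem
        · exact hy ⟨hmem.1, hmem.2⟩
        · exact hmem
    simp only [hsets]
    by_cases ht : t < 1 + x
    · rw [if_pos ⟨hx, ht⟩]
      refine le_antisymm (sInf_le ?_) (le_sInf fun σ hσ => ?_)
      · rw [mem_setOf_eq, if_neg (lt_irrefl _)]
        simp
      · rw [mem_setOf_eq] at hσ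
        by_contra hcon; push_neg at hcon
        rw [if_pos hcon, Real.volume_Ioo, sub_zero] at hσ
        have : ENNReal.ofReal t < ENNReal.ofReal (1 + x) :=
          (ENNReal.ofReal_lt_ofReal_iff h1x).2 ht
        exact absurd hσ (not_le.2 this)
    · rw [if_neg (fun h => ht h.2)]
      refine le_antisymm (sInf_le ?_) zero_le
      rw [mem_setOf_eq, if_pos (ENNReal.ofReal_pos.2 hc), Real.volume_Ioo, sub_zero]
      exact ENNReal.ofReal_le_ofReal (not_lt.1 ht)
  · rw [if_neg (fun h => hx h.1)]
    have hsets : ∀ σ : ℝ≥0∞,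
        {y : ℝ | σ < ENNReal.ofReal |if 0 < x ∧ 0 < y ∧ y < 1 + x then (1+x) ^ (-1/p) else 0|}
          = (∅ : Set ℝ) := by
      intro σ; ext y
      rw [mem_setOf_eq, if_neg (fun h => hx h.1), abs_zero, ENNReal.ofReal_zero]
      simp
    simp only [hsets, measure_empty]
    have : {σ : ℝ≥0∞ | (0:ℝ≥0∞) ≤ ENNReal.ofReal t} = univ := by
      ext σ; simp
    rw [this, sInf_univ]
    rfl

lemma inner_F10 {p : ℝ} (hp : 0 < p) (x : ℝ) :
    (∫⁻ t in Ioi (0:ℝ), (rearrY (F10 p) x t) ^ p * ENNReal.ofReal 1)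
      = if 0 < x then 1 else 0 := by
  simp only [rearrY_F10, ENNReal.ofReal_one, mul_one]
  by_cases hx : 0 < x
  · have h1x : (0:ℝ) < 1 + x := by linarith
    have hc : 0 < (1 + x) ^ (-1/p) := Real.rpow_pos_of_pos h1x _
    rw [if_pos hx]
    have key : ∀ t ∈ Ioi (0:ℝ),
        (if 0 < x ∧ t < 1 + x then ENNReal.ofReal ((1+x) ^ (-1/p)) else 0) ^ p
          = (Ioo (0:ℝ) (1+x)).indicator (fun _ => ENNReal.ofReal ((1+x)⁻¹)) t := by
      intro t ht
      by_cases htx : t < 1 + x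
      · rw [if_pos ⟨hx, htx⟩, indicator_of_mem (mem_Ioo.2 ⟨ht, htx⟩),
          ENNReal.ofReal_rpow_of_pos hc, ← Real.rpow_mul h1x.le,
          show (-1/p) * p = -1 by field_simp, Real.rpow_neg_one]
      · rw [if_neg (fun h => htx h.2), indicator_of_notMem (fun hm => htx (mem_Ioo.1 hm).2),
          ENNReal.zero_rpow_of_pos hp]
    rw [setLIntegral_congr_fun measurableSet_Ioi key,
      lintegral_indicator measurableSet_Ioo, setLIntegral_const,
      Measure.restrict_apply measurableSet_Ioo,
      inter_eq_left.2 (fun y hy => hy.1), Real.volume_Ioo, sub_zero,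
      ← ENNReal.ofReal_mul (inv_nonneg.2 h1x.le), inv_mul_cancel₀ h1x.ne',
      ENNReal.ofReal_one]
  · rw [if_neg hx]
    have key : ∀ t ∈ Ioi (0:ℝ),
        (if 0 < x ∧ t < 1 + x then ENNReal.ofReal ((1+x) ^ (-1/p)) else 0) ^ p
          = (0:ℝ≥0∞) := fun t _ => by
      rw [if_neg (fun h => hx h.1), ENNReal.zero_rpow_of_pos hp]
    rw [setLIntegral_congr_fun measurableSet_Ioi key, lintegral_zero]

lemma rearrE_inner_F10 {p : ℝ} (hp : 0 < p) (s : ℝ) :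
    rearrE (fun x => ∫⁻ t in Ioi (0:ℝ),
      (rearrY (F10 p) x t) ^ p * ENNReal.ofReal 1) s = 1 := by
  unfold rearrE
  simp only [inner_F10 hp]
  refine le_antisymm (sInf_le ?_) (le_sInf fun σ hσ => ?_)
  · have h1 : {x : ℝ | (1:ℝ≥0∞) < if 0 < x then 1 else 0} = ∅ := by
      ext x; simp only [mem_setOf_eq, mem_empty_iff_false, iff_false, not_lt]
      split <;> simp
    rw [mem_setOf_eq, h1]
    simp
  · rw [mem_setOf_eq] at hσ
    by_contra hcon; push_neg at hcon
    have hsub : Ioi (0:ℝ) ⊆ {x : ℝ | σ < if 0 < x then (1:ℝ≥0∞) else 0} := fun x hx => by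
      rw [mem_setOf_eq, if_pos (mem_Ioi.1 hx)]; exact hcon
    have hv : volume (Ioi (0:ℝ)) ≤ ENNReal.ofReal s := (measure_mono hsub).trans hσ
    rw [Real.volume_Ioi] at hv
    exact ENNReal.ofReal_ne_top (top_le_iff.1 hv)

lemma rearrYX_lb_F10 {p : ℝ} (hp : 0 < p) {s t : ℝ} (hs1 : s ≤ 1) (ht : 1 ≤ t) :
    ENNReal.ofReal ((2 + t) ^ (-1/p)) ≤ rearrYX (F10 p) s t := by
  unfold rearrYX rearrE
  refine le_sInf fun σ hσ => ?_
  rw [mem_setOf_eq] at hσ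
  by_contra hcon; push_neg at hcon
  have hsub : Ioo (t-1) (t+1) ⊆ {x : ℝ | σ < rearrY (F10 p) x t} := by
    intro x hx
    have hx0 : 0 < x := lt_of_le_of_lt (by linarith) hx.1
    have hx1 : t < 1 + x := by linarith [hx.1]
    rw [mem_setOf_eq, rearrY_F10, if_pos ⟨hx0, hx1⟩]
    refine lt_of_lt_of_le hcon (ENNReal.ofReal_le_ofReal ?_)
    exact Real.rpow_le_rpow_of_nonpos (by linarith) (by linarith [hx.2])
      (le_of_lt (div_neg_of_neg_of_pos (by norm_num) hp))
  have h2 := (measure_mono hsub).trans hσ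
  rw [Real.volume_Ioo] at h2
  have : ENNReal.ofReal s < ENNReal.ofReal (t+1-(t-1)) := by
    rw [ENNReal.ofReal_lt_ofReal_iff (by linarith)]; linarith
  exact absurd h2 (not_le.2 this)

lemma integral_inv_top_F10 : ∫⁻ t in Ioi (1:ℝ), ENNReal.ofReal ((2 + t)⁻¹) = ⊤ := by
  by_contra h
  have hlt : ∫⁻ t in Ioi (1:ℝ), ENNReal.ofReal ((2 + t)⁻¹) < ⊤ := lt_top_iff_ne_top.2 h
  have hmeas : Measurable fun t : ℝ => (2 + t)⁻¹ := (measurable_const.add measurable_id).inv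
  have hint : IntegrableOn (fun t : ℝ => (2 + t)⁻¹) (Ioi 1) := by
    refine ⟨hmeas.aestronglyMeasurable, ?_⟩
    rw [hasFiniteIntegral_iff_ofReal ?_]
    · exact hlt
    · filter_upwards [ae_restrict_mem measurableSet_Ioi] with t ht
      exact le_of_lt (inv_pos.2 (by linarith [mem_Ioi.1 ht]))
  have hinv : IntegrableOn (fun t : ℝ => t⁻¹) (Ioi 1) := by
    refine (hint.const_mul 3).mono' measurable_inv.aestronglyMeasurable ?_
    filter_upwards [ae_restrict_mem measurableSet_Ioi] with t ht
    have ht1 : (1:ℝ) < t := ht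
    rw [Real.norm_eq_abs, abs_of_nonneg (inv_nonneg.2 (by linarith))]
    rw [← one_div, ← div_eq_mul_inv, div_le_div_iff₀ (by linarith) (by linarith)]
    linarith
  exact not_IntegrableOn_Ioi_inv hinv

end Helpers

/-- with `u = χ_{[0,1]}` and `v ≡ 1`, there is a measurable `f` with
`‖f‖_{Λ^p(u)[Λ^p(v)]} = 1` and `‖f‖_{Λ₂^p(uv)} = ∞`; in particular
`Λ^p(u)[Λ^p(v)] ⊄ Λ₂^p(uv)`. -/
theorem mixed_not_subset_lam2 (p : ℝ) (hp : 0 < p) :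
    ∃ f : ℝ × ℝ → ℝ, Measurable f ∧
      mixedNorm p ((Icc (0:ℝ) 1).indicator fun _ => (1:ℝ)) (fun _ => (1:ℝ)) f = 1 ∧
      lam2Norm p (fun z => (Icc (0:ℝ) 1).indicator (fun _ => (1:ℝ)) z.1 * 1) f = ⊤ := by
  refine ⟨F10 p, F10_meas p, ?_, ?_⟩
  · -- mixed norm equals 1
    unfold mixedNorm
    have hcong : ∀ s ∈ Ioi (0:ℝ),
        rearrE (fun x => ∫⁻ t in Ioi (0:ℝ),
            (rearrY (F10 p) x t) ^ p * ENNReal.ofReal ((fun _ : ℝ => (1:ℝ)) t)) s *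
          ENNReal.ofReal (((Icc (0:ℝ) 1).indicator fun _ => (1:ℝ)) s)
        = (Icc (0:ℝ) 1).indicator (fun _ => (1:ℝ≥0∞)) s := by
      intro s _
      rw [rearrE_inner_F10 hp s, one_mul]
      by_cases hs : s ∈ Icc (0:ℝ) 1
      · rw [indicator_of_mem hs, indicator_of_mem hs, ENNReal.ofReal_one]
      · rw [indicator_of_notMem hs, indicator_of_notMem hs, ENNReal.ofReal_zero]
    rw [setLIntegral_congr_fun measurableSet_Ioi hcong,
      lintegral_indicator measurableSet_Icc, setLIntegral_const,
      Measure.restrict_apply measurableSet_Icc]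
    have hIcc : Icc (0:ℝ) 1 ∩ Ioi 0 = Ioc (0:ℝ) 1 := by
      ext x
      simp only [mem_inter_iff, mem_Icc, mem_Ioi, mem_Ioc]
      constructor
      · rintro ⟨⟨_, h1⟩, h2⟩; exact ⟨h2, h1⟩
      · rintro ⟨h1, h2⟩; exact ⟨⟨h1.le, h2⟩, h1⟩
    rw [hIcc, Real.volume_Ioc, sub_zero, ENNReal.ofReal_one, one_mul, ENNReal.one_rpow]
  · -- lam2 norm is infinite
    unfold lam2Norm
    have hinner : ∀ s ∈ Ioc (0:ℝ) 1,
        (∫⁻ t in Ioi (0:ℝ), (rearrYX (F10 p) s t) ^ p *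
          ENNReal.ofReal ((Icc (0:ℝ) 1).indicator (fun _ => (1:ℝ)) s * 1)) = ⊤ := by
      intro s hs
      have hws : (Icc (0:ℝ) 1).indicator (fun _ => (1:ℝ)) s * 1 = 1 := by
        rw [mul_one, indicator_of_mem (mem_Icc.2 ⟨hs.1.le, hs.2⟩)]
      simp only [hws, ENNReal.ofReal_one, mul_one]
      rw [eq_top_iff]
      calc (⊤:ℝ≥0∞) = ∫⁻ t in Ioi (1:ℝ), ENNReal.ofReal ((2 + t)⁻¹) :=
            integral_inv_top_F10.symm
        _ ≤ ∫⁻ t in Ioi (1:ℝ), (rearrYX (F10 p) s t) ^ p := by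
            refine lintegral_mono_ae ?_
            filter_upwards [ae_restrict_mem measurableSet_Ioi] with t ht
            have ht1 : (1:ℝ) < t := ht
            have h2t : (0:ℝ) < 2 + t := by linarith
            have heq : ENNReal.ofReal ((2 + t)⁻¹)
                = (ENNReal.ofReal ((2 + t) ^ (-1/p))) ^ p := by
              rw [ENNReal.ofReal_rpow_of_pos (Real.rpow_pos_of_pos h2t _),
                ← Real.rpow_mul h2t.le, show (-1/p) * p = -1 by field_simp,
                Real.rpow_neg_one]
            rw [heq]
            exact ENNReal.rpow_le_rpow (rearrYX_lb_F10 hp hs.2 ht1.le) hp.le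
        _ ≤ ∫⁻ t in Ioi (0:ℝ), (rearrYX (F10 p) s t) ^ p :=
            lintegral_mono_set (Ioi_subset_Ioi zero_le_one)
    have htot : (∫⁻ s in Ioi (0:ℝ), ∫⁻ t in Ioi (0:ℝ), (rearrYX (F10 p) s t) ^ p *
        ENNReal.ofReal ((Icc (0:ℝ) 1).indicator (fun _ => (1:ℝ)) s * 1)) = ⊤ := by
      rw [eq_top_iff]
      calc (⊤:ℝ≥0∞) = ⊤ * volume (Ioc (0:ℝ) 1) := by
            rw [Real.volume_Ioc, sub_zero, ENNReal.ofReal_one, mul_one]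
        _ = ∫⁻ _ in Ioc (0:ℝ) 1, (⊤:ℝ≥0∞) := (setLIntegral_const _ _).symm
        _ = ∫⁻ s in Ioc (0:ℝ) 1, ∫⁻ t in Ioi (0:ℝ), (rearrYX (F10 p) s t) ^ p *
              ENNReal.ofReal ((Icc (0:ℝ) 1).indicator (fun _ => (1:ℝ)) s * 1) :=
            setLIntegral_congr_fun measurableSet_Ioc
              (fun s hs => (hinner s hs).symm)
        _ ≤ _ := lintegral_mono_set Ioc_subset_Ioi_self
    rw [htot]
    exact ENNReal.top_rpow_of_pos (by positivity)
end

section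
/- Let 0 < p < ∞, u = χ_{[0,1]} and v ≡ 1. Then there exists a measurable function f : ℝ² → ℝ (namely f = Σ_{k≥0} (k+1)^{-1/p} χ_{[k,k+1]×[k,k+1]}) such that ‖f‖_{Λ₂^p(uv)} = 1 while ‖f‖_{Λ^p(v)[Λ^p(u)]} = ∞. In particular, Λ₂^p(uv) is not contained in Λ^p(v)[Λ^p(u)]. -/
open MeasureTheory ENNReal Set

section AuxLemmas

namespace RearrAux

open Filter

lemma rearrE_zero (t : ℝ) : rearrE (fun _ => (0:ℝ≥0∞)) t = 0 := by
  apply le_antisymm _ zero_le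
  apply sInf_le
  show volume {x : ℝ | (0:ℝ≥0∞) < 0} ≤ ENNReal.ofReal t
  simp

lemma rearrE_indicator (a : ℝ≥0∞) {S : Set ℝ} (hS : volume S = 1) (t : ℝ) :
    rearrE (S.indicator fun _ => a) t = if ENNReal.ofReal t < 1 then a else 0 := by
  have hset : ∀ σ : ℝ≥0∞, {x : ℝ | σ < S.indicator (fun _ => a) x} = {x | x ∈ S ∧ σ < a} := by
    intro σ
    ext x
    by_cases hx : x ∈ S <;> simp [indicator_of_mem, indicator_of_notMem, hx]
  split_ifs with ht
  · apply le_antisymm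
    · apply sInf_le
      show volume _ ≤ _
      rw [hset]
      simp
    · apply le_sInf
      intro σ hσ
      by_contra hlt
      push_neg at hlt
      rw [mem_setOf_eq, hset] at hσ
      have heq : {x | x ∈ S ∧ σ < a} = S := by ext x; simp [hlt]
      rw [heq, hS] at hσ
      exact absurd hσ (not_le.mpr ht)
  · apply le_antisymm _ zero_le
    apply sInf_le
    show volume _ ≤ _
    rw [hset]
    calc volume {x | x ∈ S ∧ (0:ℝ≥0∞) < a} ≤ volume S := measure_mono fun x hx => hx.1
      _ = 1 := hS
      _ ≤ _ := not_lt.mp ht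

lemma rearrE_step (c : ℕ → ℝ≥0∞) (hc : Antitone c) {s : ℝ} (hs : 0 < s) :
    rearrE (fun x => if 0 ≤ x then c ⌊x⌋.toNat else 0) s = c ⌊s⌋.toNat := by
  set m := ⌊s⌋.toNat with hm
  have hmz : (⌊s⌋.toNat : ℤ) = ⌊s⌋ := Int.toNat_of_nonneg (Int.floor_nonneg.mpr hs.le)
  have hm_le : (m:ℝ) ≤ s := by
    have h := Int.floor_le s
    rw [← hmz] at h
    exact_mod_cast h
  have hs_lt : s < (m:ℝ) + 1 := by
    have h := Int.lt_floor_add_one s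
    rw [← hmz] at h
    exact_mod_cast h
  apply le_antisymm
  · apply sInf_le
    show volume {x : ℝ | c m < _} ≤ ENNReal.ofReal s
    have hsub : {x : ℝ | c m < (if 0 ≤ x then c ⌊x⌋.toNat else 0)} ⊆ Ico (0:ℝ) m := by
      intro x hx
      rw [mem_setOf_eq] at hx
      by_cases h0 : 0 ≤ x
      · rw [if_pos h0] at hx
        refine ⟨h0, ?_⟩
        by_contra hge
        push_neg at hge
        have hfl : (m:ℤ) ≤ ⌊x⌋ := Int.le_floor.mpr (by exact_mod_cast hge)
        have : m ≤ ⌊x⌋.toNat := by omega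
        exact absurd (hc this) (not_le.mpr hx)
      · rw [if_neg h0] at hx
        simp at hx
    calc volume _ ≤ volume (Ico (0:ℝ) m) := measure_mono hsub
      _ = ENNReal.ofReal ((m:ℝ) - 0) := Real.volume_Ico
      _ ≤ ENNReal.ofReal s := ENNReal.ofReal_le_ofReal (by linarith)
  · apply le_sInf
    intro σ hσ
    by_contra hlt
    push_neg at hlt
    rw [mem_setOf_eq] at hσ
    have hsup : Ico (0:ℝ) ((m:ℝ)+1) ⊆ {x : ℝ | σ < (if 0 ≤ x then c ⌊x⌋.toNat else 0)} := by
      rintro x ⟨hx0, hx1⟩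
      rw [mem_setOf_eq, if_pos hx0]
      refine lt_of_lt_of_le hlt (hc ?_)
      have hfl : ⌊x⌋ < (m:ℤ) + 1 := Int.floor_lt.mpr (by exact_mod_cast hx1)
      omega
    have hbig : ENNReal.ofReal ((m:ℝ)+1) ≤ ENNReal.ofReal s := by
      calc ENNReal.ofReal ((m:ℝ)+1) = volume (Ico (0:ℝ) ((m:ℝ)+1)) := by
            rw [Real.volume_Ico]; ring_nf
        _ ≤ volume {x : ℝ | σ < (if 0 ≤ x then c ⌊x⌋.toNat else 0)} := measure_mono hsup
        _ ≤ ENNReal.ofReal s := hσ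
    rw [ENNReal.ofReal_le_ofReal_iff hs.le] at hbig
    linarith

noncomputable def cReal (p : ℝ) (k : ℕ) : ℝ := ((k : ℝ) + 1) ^ (-(1/p))
noncomputable def cEnn (p : ℝ) (k : ℕ) : ℝ≥0∞ := ENNReal.ofReal (cReal p k)
noncomputable def dEnn (k : ℕ) : ℝ≥0∞ := ENNReal.ofReal (((k:ℝ) + 1)⁻¹)
noncomputable def Fc (p : ℝ) : ℝ × ℝ → ℝ :=
  fun z => if ⌊z.1⌋ = ⌊z.2⌋ ∧ 0 ≤ z.1 then cReal p ⌊z.1⌋.toNat else 0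

lemma cReal_pos (p : ℝ) (k : ℕ) : 0 < cReal p k := Real.rpow_pos_of_pos (by positivity) _

lemma cEnn_antitone (p : ℝ) (hp : 0 < p) : Antitone (cEnn p) := by
  intro j k hjk
  apply ENNReal.ofReal_le_ofReal
  apply Real.rpow_le_rpow_of_nonpos (by positivity)
  · have : (j:ℝ) ≤ (k:ℝ) := by exact_mod_cast hjk
    linarith
  · rw [neg_nonpos]
    positivity

lemma dEnn_antitone : Antitone dEnn := by
  intro j k hjk
  apply ENNReal.ofReal_le_ofReal
  have : (j:ℝ) ≤ (k:ℝ) := by exact_mod_cast hjk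
  rw [inv_le_inv₀ (by positivity) (by positivity)]
  linarith

lemma dEnn_zero : dEnn 0 = 1 := by simp [dEnn]

lemma cEnn_rpow (p : ℝ) (hp : 0 < p) (k : ℕ) : cEnn p k ^ p = dEnn k := by
  rw [cEnn, ENNReal.ofReal_rpow_of_pos (cReal_pos p k), cReal, dEnn,
    ← Real.rpow_mul (by positivity), neg_mul, one_div, inv_mul_cancel₀ hp.ne',
    Real.rpow_neg_one]

lemma floor_toNat_cast {x : ℝ} (hx : 0 ≤ x) : ((⌊x⌋.toNat : ℤ)) = ⌊x⌋ :=
  Int.toNat_of_nonneg (Int.floor_nonneg.mpr hx)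

lemma mem_Ico_iff_floor {x z : ℝ} (hx : 0 ≤ x) :
    z ∈ Ico ((⌊x⌋.toNat : ℝ)) ((⌊x⌋.toNat : ℝ) + 1) ↔ ⌊z⌋ = ⌊x⌋ := by
  have h : ((⌊x⌋.toNat : ℝ)) = ((⌊x⌋ : ℤ) : ℝ) := by
    exact_mod_cast congrArg Int.cast (floor_toNat_cast hx)
  rw [mem_Ico, h]
  exact ⟨fun hz => (Int.floor_eq_iff.mpr hz).symm ▸ rfl, fun hz => by
    rw [← hz]; exact ⟨Int.floor_le z, Int.lt_floor_add_one z⟩⟩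

lemma Fc_measurable (p : ℝ) : Measurable (Fc p) := by
  apply Measurable.ite
  · have h1 : MeasurableSet {z : ℝ × ℝ | ⌊z.1⌋ = ⌊z.2⌋} := by
      have : {z : ℝ × ℝ | ⌊z.1⌋ = ⌊z.2⌋} =
          (fun z : ℝ × ℝ => ⌊z.1⌋ - ⌊z.2⌋) ⁻¹' {0} := by
        ext z; simp [sub_eq_zero]
      rw [this]
      exact ((Int.measurable_floor.comp measurable_fst).sub
        (Int.measurable_floor.comp measurable_snd)) (measurableSet_singleton 0)
    have h2 : MeasurableSet {z : ℝ × ℝ | 0 ≤ z.1} :=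
      measurableSet_le measurable_const measurable_fst
    exact h1.inter h2
  · exact (measurable_from_top (f := fun n : ℤ => cReal p n.toNat)).comp
      (Int.measurable_floor.comp measurable_fst)
  · exact measurable_const

lemma Fc_fst (p : ℝ) {x : ℝ} (hx : 0 ≤ x) :
    (fun y => ENNReal.ofReal |Fc p (x, y)|) =
      (Ico ((⌊x⌋.toNat : ℝ)) ((⌊x⌋.toNat : ℝ) + 1)).indicator (fun _ => cEnn p ⌊x⌋.toNat) := by
  funext y
  by_cases hy : y ∈ Ico ((⌊x⌋.toNat : ℝ)) ((⌊x⌋.toNat : ℝ) + 1)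
  · rw [indicator_of_mem hy]
    have hfl : ⌊y⌋ = ⌊x⌋ := (mem_Ico_iff_floor hx).mp hy
    have hcond : ⌊x⌋ = ⌊y⌋ ∧ 0 ≤ x := ⟨hfl.symm, hx⟩
    simp only [Fc, if_pos hcond, abs_of_nonneg (cReal_pos p _).le, cEnn]
  · rw [indicator_of_notMem hy]
    have hfl : ¬ ⌊y⌋ = ⌊x⌋ := fun h => hy ((mem_Ico_iff_floor hx).mpr h)
    simp only [Fc, if_neg (fun h : ⌊x⌋ = ⌊y⌋ ∧ 0 ≤ x => hfl h.1.symm), abs_zero,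
      ENNReal.ofReal_zero]

lemma Fc_snd (p : ℝ) {y : ℝ} (hy : 0 ≤ y) :
    (fun x => ENNReal.ofReal |Fc p (x, y)|) =
      (Ico ((⌊y⌋.toNat : ℝ)) ((⌊y⌋.toNat : ℝ) + 1)).indicator (fun _ => cEnn p ⌊y⌋.toNat) := by
  funext x
  by_cases hx : x ∈ Ico ((⌊y⌋.toNat : ℝ)) ((⌊y⌋.toNat : ℝ) + 1)
  · rw [indicator_of_mem hx]
    have hfl : ⌊x⌋ = ⌊y⌋ := (mem_Ico_iff_floor hy).mp hx
    have hx0 : 0 ≤ x := le_trans (by positivity) hx.1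
    have htn : ⌊x⌋.toNat = ⌊y⌋.toNat := by rw [hfl]
    have hcond : ⌊x⌋ = ⌊y⌋ ∧ 0 ≤ x := ⟨hfl, hx0⟩
    simp only [Fc, if_pos hcond, abs_of_nonneg (cReal_pos p _).le, cEnn, htn]
  · rw [indicator_of_notMem hx]
    have hfl : ¬ ⌊x⌋ = ⌊y⌋ := fun h => hx ((mem_Ico_iff_floor hy).mpr h)
    simp only [Fc, if_neg (fun h : ⌊x⌋ = ⌊y⌋ ∧ 0 ≤ x => hfl h.1), abs_zero,
      ENNReal.ofReal_zero]

lemma Fc_fst_neg (p : ℝ) {x : ℝ} (hx : ¬ 0 ≤ x) :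
    (fun y => ENNReal.ofReal |Fc p (x, y)|) = fun _ => (0:ℝ≥0∞) := by
  funext y
  simp only [Fc, if_neg (fun h : ⌊x⌋ = ⌊y⌋ ∧ 0 ≤ x => hx h.2), abs_zero, ENNReal.ofReal_zero]

lemma Fc_snd_neg (p : ℝ) {y : ℝ} (hy : ¬ 0 ≤ y) :
    (fun x => ENNReal.ofReal |Fc p (x, y)|) = fun _ => (0:ℝ≥0∞) := by
  funext x
  have hcond : ¬ (⌊x⌋ = ⌊y⌋ ∧ 0 ≤ x) := by
    rintro ⟨hfl, hx0⟩
    have h1 : (0:ℤ) ≤ ⌊x⌋ := Int.floor_nonneg.mpr hx0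
    exact hy (Int.floor_nonneg.mp (hfl ▸ h1))
  simp only [Fc, if_neg hcond, abs_zero, ENNReal.ofReal_zero]

lemma lintegral_indicator_Ioo01 (A : ℝ≥0∞) :
    ∫⁻ s in Ioi (0:ℝ), (Ioo (0:ℝ) 1).indicator (fun _ => A) s = A := by
  rw [lintegral_indicator measurableSet_Ioo,
    Measure.restrict_restrict measurableSet_Ioo,
    inter_eq_self_of_subset_left Ioo_subset_Ioi_self, setLIntegral_const,
    Real.volume_Ioo]
  simp

lemma lintegral_ite_lt_one (A : ℝ≥0∞) :
    ∫⁻ t in Ioi (0:ℝ), (if ENNReal.ofReal t < 1 then A else 0) = A := by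
  rw [setLIntegral_congr_fun measurableSet_Ioi
    (fun t (ht : t ∈ Ioi (0:ℝ)) => ?_),
    lintegral_indicator_Ioo01 A]
  by_cases h1 : t < 1
  · rw [if_pos (ENNReal.ofReal_lt_one.mpr h1)]
    exact (indicator_of_mem (mem_Ioo.mpr ⟨ht, h1⟩) (fun _ => A)).symm
  · rw [if_neg (fun h => h1 (ENNReal.ofReal_lt_one.mp h))]
    exact (indicator_of_notMem (fun h => h1 (mem_Ioo.mp h).2) (fun _ => A)).symm

lemma harmonic_enn_top : ∑' k : ℕ, ENNReal.ofReal (((k:ℝ) + 1)⁻¹) = ⊤ := by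
  by_contra h
  have hsum := ENNReal.summable_toReal h
  have heq : (fun k : ℕ => (ENNReal.ofReal (((k:ℝ) + 1)⁻¹)).toReal) =
      fun k : ℕ => (((k:ℕ) + 1 : ℕ) : ℝ)⁻¹ := by
    funext k
    rw [ENNReal.toReal_ofReal (by positivity)]
    push_cast
    ring_nf
  rw [heq] at hsum
  exact Real.not_summable_natCast_inv ((summable_nat_add_iff 1).mp hsum)

lemma lintegral_floor_inv_top :
    ∫⁻ t in Ioi (0:ℝ), ENNReal.ofReal (((⌊t⌋.toNat : ℝ) + 1)⁻¹) = ⊤ := by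
  have hdisj : Pairwise (Function.onFun Disjoint fun k : ℕ => Ioo (k:ℝ) (k+1)) := by
    have key : ∀ i j : ℕ, i < j → Disjoint (Ioo (i:ℝ) (i+1)) (Ioo (j:ℝ) (j+1)) := by
      intro i j hij
      apply Set.disjoint_left.mpr
      rintro x ⟨_, hxi⟩ ⟨hxj, _⟩
      have : (i:ℝ) + 1 ≤ j := by exact_mod_cast hij
      linarith
    intro i j hij
    rcases hij.lt_or_gt with h | h
    · exact key i j h
    · exact (key j i h).symm
  have hsub : (⋃ k : ℕ, Ioo (k:ℝ) (k+1)) ⊆ Ioi 0 := by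
    intro x hx
    simp only [mem_iUnion, mem_Ioo] at hx
    obtain ⟨k, hk1, _⟩ := hx
    exact lt_of_le_of_lt (Nat.cast_nonneg k) hk1
  apply top_le_iff.mp
  calc (⊤:ℝ≥0∞) = ∑' k : ℕ, ENNReal.ofReal (((k:ℝ) + 1)⁻¹) := harmonic_enn_top.symm
    _ = ∑' k : ℕ, ∫⁻ t in Ioo (k:ℝ) (k+1), ENNReal.ofReal (((⌊t⌋.toNat : ℝ) + 1)⁻¹) := by
        apply tsum_congr
        intro k
        symm
        rw [setLIntegral_congr_fun measurableSet_Ioo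
          ((fun t (ht : t ∈ Ioo (k:ℝ) (k+1)) =>
            show ENNReal.ofReal (((⌊t⌋.toNat : ℝ) + 1)⁻¹) = ENNReal.ofReal (((k:ℝ) + 1)⁻¹) by
              have hfl : ⌊t⌋ = (k:ℤ) := by
                rw [Int.floor_eq_iff]
                exact ⟨by exact_mod_cast ht.1.le, by exact_mod_cast ht.2⟩
              rw [hfl]
              simp)), setLIntegral_const, Real.volume_Ioo]
        simp
    _ = ∫⁻ t in ⋃ k : ℕ, Ioo (k:ℝ) (k+1), ENNReal.ofReal (((⌊t⌋.toNat : ℝ) + 1)⁻¹) :=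
        (lintegral_iUnion (fun k => measurableSet_Ioo) hdisj _).symm
    _ ≤ _ := lintegral_mono_set hsub

lemma rearrY_eq (p : ℝ) (x t : ℝ) :
    rearrY (Fc p) x t =
      if 0 ≤ x then (if ENNReal.ofReal t < 1 then cEnn p ⌊x⌋.toNat else 0) else 0 := by
  by_cases hx : 0 ≤ x
  · rw [if_pos hx]
    simp only [rearrY, rearr]
    rw [Fc_fst p hx, rearrE_indicator _ (by rw [Real.volume_Ico]; simp) t]
  · rw [if_neg hx]
    simp only [rearrY, rearr]
    rw [Fc_fst_neg p hx]
    exact rearrE_zero t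

lemma rearrX_eq (p : ℝ) (s y : ℝ) :
    rearrX (Fc p) s y =
      if 0 ≤ y then (if ENNReal.ofReal s < 1 then cEnn p ⌊y⌋.toNat else 0) else 0 := by
  by_cases hy : 0 ≤ y
  · rw [if_pos hy]
    simp only [rearrX, rearr]
    rw [Fc_snd p hy, rearrE_indicator _ (by rw [Real.volume_Ico]; simp) s]
  · rw [if_neg hy]
    simp only [rearrX, rearr]
    rw [Fc_snd_neg p hy]
    exact rearrE_zero s

lemma rearrYX_eq (p : ℝ) (hp : 0 < p) {s : ℝ} (hs : 0 < s) (t : ℝ) :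
    rearrYX (Fc p) s t = if ENNReal.ofReal t < 1 then cEnn p ⌊s⌋.toNat else 0 := by
  rw [rearrYX]
  by_cases ht : ENNReal.ofReal t < 1
  · rw [if_pos ht]
    have heq : (fun x => rearrY (Fc p) x t) = fun x => if 0 ≤ x then cEnn p ⌊x⌋.toNat else 0 := by
      funext x
      rw [rearrY_eq, if_pos ht]
    rw [heq, rearrE_step (cEnn p) (cEnn_antitone p hp) hs]
  · rw [if_neg ht]
    have heq : (fun x => rearrY (Fc p) x t) = fun _ => (0:ℝ≥0∞) := by
      funext x
      rw [rearrY_eq, if_neg ht]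
      simp
    rw [heq, rearrE_zero]

end RearrAux

end AuxLemmas


/-- with `u = χ_{[0,1]}` and `v ≡ 1`, there is a measurable `f` with
`‖f‖_{Λ₂^p(uv)} = 1` and `‖f‖_{Λ^p(v)[Λ^p(u)]} = ∞`; in particular
`Λ₂^p(uv) ⊄ Λ^p(v)[Λ^p(u)]`. -/
theorem lam2_not_subset_mixedRev (p : ℝ) (hp : 0 < p) :
    ∃ f : ℝ × ℝ → ℝ, Measurable f ∧
      lam2Norm p (fun z => (Icc (0:ℝ) 1).indicator (fun _ => (1:ℝ)) z.1 * 1) f = 1 ∧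
      mixedNormRev p (fun _ => (1:ℝ)) ((Icc (0:ℝ) 1).indicator fun _ => (1:ℝ)) f = ⊤ := by
  refine ⟨RearrAux.Fc p, RearrAux.Fc_measurable p, ?_, ?_⟩
  · -- `‖f‖_{Λ₂^p(uv)} = 1`
    have inner_eq : ∀ s ∈ Ioi (0:ℝ),
        (∫⁻ t in Ioi (0:ℝ), (rearrYX (RearrAux.Fc p) s t) ^ p *
          ENNReal.ofReal ((Icc (0:ℝ) 1).indicator (fun _ => (1:ℝ)) s * 1)) =
        RearrAux.dEnn ⌊s⌋.toNat *
          ENNReal.ofReal ((Icc (0:ℝ) 1).indicator (fun _ => (1:ℝ)) s * 1) := by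
      intro s hs
      have hpt : ∀ t ∈ Ioi (0:ℝ), (rearrYX (RearrAux.Fc p) s t) ^ p *
          ENNReal.ofReal ((Icc (0:ℝ) 1).indicator (fun _ => (1:ℝ)) s * 1) =
          if ENNReal.ofReal t < 1 then RearrAux.dEnn ⌊s⌋.toNat *
            ENNReal.ofReal ((Icc (0:ℝ) 1).indicator (fun _ => (1:ℝ)) s * 1) else 0 := by
        intro t ht
        rw [RearrAux.rearrYX_eq p hp hs t]
        split_ifs with h
        · rw [RearrAux.cEnn_rpow p hp]
        · rw [ENNReal.zero_rpow_of_pos hp, zero_mul]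
      rw [setLIntegral_congr_fun measurableSet_Ioi hpt,
        RearrAux.lintegral_ite_lt_one]
    have houter : (∫⁻ s in Ioi (0:ℝ), RearrAux.dEnn ⌊s⌋.toNat *
        ENNReal.ofReal ((Icc (0:ℝ) 1).indicator (fun _ => (1:ℝ)) s * 1)) = 1 := by
      have h01 : volume ({0, 1} : Set ℝ) = 0 :=
        (Set.toFinite ({0, 1} : Set ℝ)).measure_zero volume
      have hae : (fun s : ℝ => RearrAux.dEnn ⌊s⌋.toNat *
          ENNReal.ofReal ((Icc (0:ℝ) 1).indicator (fun _ => (1:ℝ)) s * 1)) =ᵐ[volume]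
          (Ioo (0:ℝ) 1).indicator (fun _ => (1:ℝ≥0∞)) := by
        filter_upwards [compl_mem_ae_iff.mpr h01] with s hs
        have hs0 : s ≠ 0 := fun h => hs (by simp [h])
        have hs1 : s ≠ 1 := fun h => hs (by simp [h])
        by_cases hpos : 0 < s
        · by_cases hlt : s < 1
          · have hfl : ⌊s⌋ = 0 := Int.floor_eq_zero_iff.mpr (mem_Ico.mpr ⟨hpos.le, hlt⟩)
            rw [hfl, indicator_of_mem (mem_Ioo.mpr ⟨hpos, hlt⟩) (fun _ => (1:ℝ≥0∞)),
              indicator_of_mem (mem_Icc.mpr ⟨hpos.le, hlt.le⟩) (fun _ => (1:ℝ))]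
            simp [RearrAux.dEnn]
          · have hgt : 1 < s := lt_of_le_of_ne (not_lt.mp hlt) (Ne.symm hs1)
            rw [indicator_of_notMem
                (fun h => absurd (mem_Icc.mp h).2 (not_le.mpr hgt)) (fun _ => (1:ℝ)),
              indicator_of_notMem
                (fun h => absurd (mem_Ioo.mp h).2 (not_lt.mpr hgt.le)) (fun _ => (1:ℝ≥0∞))]
            simp
        · have hneg : s < 0 := lt_of_le_of_ne (not_lt.mp hpos) hs0
          rw [indicator_of_notMem
              (fun h => absurd (mem_Icc.mp h).1 (not_le.mpr hneg)) (fun _ => (1:ℝ)),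
            indicator_of_notMem
              (fun h => absurd (mem_Ioo.mp h).1 (not_lt.mpr hneg.le)) (fun _ => (1:ℝ≥0∞))]
          simp
      rw [lintegral_congr_ae (ae_restrict_of_ae hae), RearrAux.lintegral_indicator_Ioo01]
    simp only [lam2Norm]
    rw [setLIntegral_congr_fun measurableSet_Ioi inner_eq, houter,
      ENNReal.one_rpow]
  · -- `‖f‖_{Λ^p(v)[Λ^p(u)]} = ⊤`
    simp only [mixedNormRev]
    have hJ : (fun y => ∫⁻ s in Ioi (0:ℝ), (rearrX (RearrAux.Fc p) s y) ^ p *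
        ENNReal.ofReal ((Icc (0:ℝ) 1).indicator (fun _ => (1:ℝ)) s)) =
        fun y => if 0 ≤ y then RearrAux.dEnn ⌊y⌋.toNat else 0 := by
      funext y
      by_cases hy : 0 ≤ y
      · rw [if_pos hy]
        have hpt : ∀ s ∈ Ioi (0:ℝ), (rearrX (RearrAux.Fc p) s y) ^ p *
            ENNReal.ofReal ((Icc (0:ℝ) 1).indicator (fun _ => (1:ℝ)) s) =
            if ENNReal.ofReal s < 1 then RearrAux.dEnn ⌊y⌋.toNat else 0 := by
          intro s hs
          rw [RearrAux.rearrX_eq p s y, if_pos hy]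
          split_ifs with h
          · have hs1 : s < 1 := ENNReal.ofReal_lt_one.mp h
            rw [RearrAux.cEnn_rpow p hp,
              indicator_of_mem (mem_Icc.mpr ⟨le_of_lt hs, hs1.le⟩) (fun _ => (1:ℝ))]
            simp
          · rw [ENNReal.zero_rpow_of_pos hp, zero_mul]
        rw [setLIntegral_congr_fun measurableSet_Ioi hpt,
          RearrAux.lintegral_ite_lt_one]
      · rw [if_neg hy]
        have hpt : ∀ s ∈ Ioi (0:ℝ), (rearrX (RearrAux.Fc p) s y) ^ p *
            ENNReal.ofReal ((Icc (0:ℝ) 1).indicator (fun _ => (1:ℝ)) s) = 0 := by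
          intro s hs
          rw [RearrAux.rearrX_eq p s y, if_neg hy, ENNReal.zero_rpow_of_pos hp, zero_mul]
        rw [setLIntegral_congr_fun measurableSet_Ioi hpt, lintegral_zero]
    have hpt2 : ∀ t ∈ Ioi (0:ℝ),
        rearrE (fun y => ∫⁻ s in Ioi (0:ℝ), (rearrX (RearrAux.Fc p) s y) ^ p *
          ENNReal.ofReal ((Icc (0:ℝ) 1).indicator (fun _ => (1:ℝ)) s)) t *
          ENNReal.ofReal (1:ℝ) =
        ENNReal.ofReal (((⌊t⌋.toNat : ℝ) + 1)⁻¹) := by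
      intro t ht
      rw [hJ, RearrAux.rearrE_step RearrAux.dEnn RearrAux.dEnn_antitone ht]
      simp [RearrAux.dEnn]
    rw [setLIntegral_congr_fun measurableSet_Ioi hpt2,
      RearrAux.lintegral_floor_inv_top]
    exact ENNReal.top_rpow_of_pos (by positivity)
end

section
/- Let u, v be weights on ℝ₊ such that 0 < ∫_0^a u(s) ds < ∞ and 0 < ∫_0^b v(t) dt < ∞ for all a, b > 0. Then sup over all nonempty decreasing sets D ⊂ ℝ²₊ of the quotient [∫_{ℝ²₊} S²(χ_D)(s,t) u(s)v(t) ds dt] / [∫_D u(s)v(t) ds dt] equals (1 + sup_{a>0} [a∫_a^∞ u(s)/s ds] / [∫_0^a u(s) ds]) · (1 + sup_{b>0} [b∫_b^∞ v(t)/t dt] / [∫_0^b v(t) dt]), as an identity in [0,∞]. -/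
open MeasureTheory ENNReal Set

noncomputable section

noncomputable def auxTail (w : ℝ → ℝ≥0∞) (σ : ℝ) : ℝ≥0∞ := ∫⁻ t in Ioi σ, (ENNReal.ofReal t)⁻¹ * w t

lemma auxTail_antitone (w : ℝ → ℝ≥0∞) : Antitone (auxTail w) :=
  fun _ _ hab => lintegral_mono_set (Ioi_subset_Ioi hab)

lemma auxTail_measurable (w : ℝ → ℝ≥0∞) : Measurable (auxTail w) := (auxTail_antitone w).measurable

lemma auxTail_eval (w : ℝ → ℝ≥0∞) (hw : Measurable w) {E : Set ℝ} (hE : MeasurableSet E) :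
    ∫⁻ τ in E, auxTail w τ =
      ∫⁻ t, ((ENNReal.ofReal t)⁻¹ * w t) * volume (E ∩ Iio t) := by
  set g : ℝ → ℝ≥0∞ := fun t => (ENNReal.ofReal t)⁻¹ * w t with hg
  have hgm : Measurable g := (measurable_ofReal.comp measurable_id).inv.mul hw
  have h1 : ∀ τ, auxTail w τ = ∫⁻ t, (Ioi τ).indicator g t := by
    intro τ; rw [lintegral_indicator measurableSet_Ioi]; rfl
  calc ∫⁻ τ in E, auxTail w τ = ∫⁻ τ in E, ∫⁻ t, (Ioi τ).indicator g t := by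
        simp_rw [h1]
    _ = ∫⁻ t, ∫⁻ τ in E, (Ioi τ).indicator g t := by
        apply lintegral_lintegral_swap
        have : (Function.uncurry fun (τ t : ℝ) => (Ioi τ).indicator g t)
            = {p : ℝ × ℝ | p.1 < p.2}.indicator (fun p => g p.2) := by
          funext p
          simp [Function.uncurry, Set.indicator_apply, mem_Ioi]
        rw [this]
        exact ((hgm.comp measurable_snd).indicator
          (measurableSet_lt measurable_fst measurable_snd)).aemeasurable
    _ = ∫⁻ t, g t * volume (E ∩ Iio t) := by
        congr 1; funext t
        have : ∀ τ, (Ioi τ).indicator g t = (Iio t).indicator (fun _ => g t) τ := by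
          intro τ; simp [Set.indicator_apply, mem_Ioi, mem_Iio]
        simp_rw [this]
        rw [lintegral_indicator_const measurableSet_Iio, Measure.restrict_apply' hE]
        rw [Set.inter_comm]

lemma rect_eval (w : ℝ → ℝ≥0∞) (hw : Measurable w) {b : ℝ} (hb : 0 < b) :
    ∫⁻ τ in Ioo 0 b, auxTail w τ =
      (∫⁻ t in Ioo 0 b, w t) + ENNReal.ofReal b * auxTail w b := by
  rw [auxTail_eval w hw measurableSet_Ioo]
  have hvol : ∀ t : ℝ, volume (Ioo (0:ℝ) b ∩ Iio t) = ENNReal.ofReal (min b t) := by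
    intro t
    have : Ioo (0:ℝ) b ∩ Iio t = Ioo 0 (min b t) := by
      ext x; simp only [mem_inter_iff, mem_Ioo, mem_Iio, lt_min_iff]; tauto
    rw [this, Real.volume_Ioo, sub_zero]
  simp_rw [hvol]
  have hsplit := (lintegral_add_compl (μ := volume) (A := Iic (0:ℝ))
    (fun t => ((ENNReal.ofReal t)⁻¹ * w t) * ENNReal.ofReal (min b t)) measurableSet_Iic).symm
  rw [compl_Iic] at hsplit
  have hs2 := lintegral_union (μ := volume)
    (f := fun t => ((ENNReal.ofReal t)⁻¹ * w t) * ENNReal.ofReal (min b t)) (A := Ioc (0:ℝ) b)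
    measurableSet_Ioi (Ioc_disjoint_Ioi (le_refl b))
  rw [Ioc_union_Ioi_eq_Ioi hb.le] at hs2
  rw [hsplit, hs2]
  have h1 : ∫⁻ t in Iic (0:ℝ),
      ((ENNReal.ofReal t)⁻¹ * w t) * ENNReal.ofReal (min b t) = 0 := by
    rw [setLIntegral_congr_fun measurableSet_Iic
      (@fun t (ht : t ≤ 0) => ?_), lintegral_zero]
    have h0 : ENNReal.ofReal (min b t) = 0 := by
      rw [ENNReal.ofReal_eq_zero]; exact min_le_of_right_le ht
    rw [h0, mul_zero]
  have h2 : ∫⁻ t in Ioc (0:ℝ) b,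
      ((ENNReal.ofReal t)⁻¹ * w t) * ENNReal.ofReal (min b t) = ∫⁻ t in Ioo 0 b, w t := by
    rw [setLIntegral_congr_fun measurableSet_Ioc
      (@fun t (ht : t ∈ Ioc 0 b) => ?_)]
    · exact setLIntegral_congr (MeasureTheory.Ioo_ae_eq_Ioc (μ := volume) (a := (0:ℝ)) (b := b)).symm
    · rw [min_eq_right ht.2, mul_comm ((ENNReal.ofReal t)⁻¹) (w t), mul_assoc,
        ENNReal.inv_mul_cancel (by simpa using ht.1) ENNReal.ofReal_ne_top, mul_one]
  have h3 : ∫⁻ t in Ioi b,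
      ((ENNReal.ofReal t)⁻¹ * w t) * ENNReal.ofReal (min b t)
      = ENNReal.ofReal b * auxTail w b := by
    rw [setLIntegral_congr_fun measurableSet_Ioi
      (@fun t (ht : b < t) => ?_)]
    · exact lintegral_const_mul _ ((measurable_ofReal.comp measurable_id).inv.mul hw)
    · rw [min_eq_left ht.le, mul_comm]
  rw [h1, h2, h3, zero_add]

lemma full_eval (w : ℝ → ℝ≥0∞) (hw : Measurable w) :
    ∫⁻ τ in Ioi (0:ℝ), auxTail w τ = ∫⁻ t in Ioi (0:ℝ), w t := by
  rw [auxTail_eval w hw measurableSet_Ioi]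
  have hvol : ∀ t : ℝ, volume (Ioi (0:ℝ) ∩ Iio t) = ENNReal.ofReal t := by
    intro t
    have : Ioi (0:ℝ) ∩ Iio t = Ioo 0 t := rfl
    rw [this, Real.volume_Ioo, sub_zero]
  simp_rw [hvol]
  have hsplit := (lintegral_add_compl (μ := volume) (A := Iic (0:ℝ))
    (fun t => ((ENNReal.ofReal t)⁻¹ * w t) * ENNReal.ofReal t) measurableSet_Iic).symm
  rw [compl_Iic] at hsplit
  rw [hsplit]
  have h1 : ∫⁻ t in Iic (0:ℝ), ((ENNReal.ofReal t)⁻¹ * w t) * ENNReal.ofReal t = 0 := by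
    rw [setLIntegral_congr_fun measurableSet_Iic
      (@fun t (ht : t ≤ 0) => ?_), lintegral_zero]
    rw [ENNReal.ofReal_eq_zero.2 ht, mul_zero]
  have h2 : ∫⁻ t in Ioi (0:ℝ), ((ENNReal.ofReal t)⁻¹ * w t) * ENNReal.ofReal t
      = ∫⁻ t in Ioi (0:ℝ), w t := by
    refine setLIntegral_congr_fun measurableSet_Ioi (@fun t (ht : 0 < t) => ?_)
    rw [mul_comm ((ENNReal.ofReal t)⁻¹) (w t), mul_assoc,
      ENNReal.inv_mul_cancel (by simpa using ht) ENNReal.ofReal_ne_top, mul_one]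
  rw [h1, h2, zero_add]

lemma section_bound (w : ℝ → ℝ≥0∞) (hw : Measurable w) (A : ℝ≥0∞)
    (hA : ∀ b : ℝ, 0 < b → ENNReal.ofReal b * auxTail w b ≤ A * ∫⁻ t in Ioo 0 b, w t)
    {E : Set ℝ} (hE0 : E ⊆ Ioi 0)
    (hEd : ∀ x ∈ E, ∀ y : ℝ, 0 < y → y ≤ x → y ∈ E) :
    ∫⁻ τ in E, auxTail w τ ≤ (1 + A) * ∫⁻ τ in E, w τ := by
  rcases E.eq_empty_or_nonempty with rfl | hne
  · simp
  by_cases hbd : BddAbove E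
  · set b := sSup E with hbdef
    have hb : 0 < b := lt_of_lt_of_le (hE0 hne.choose_spec) (le_csSup hbd hne.choose_spec)
    have hsub1 : Ioo 0 b ⊆ E := by
      intro x hx
      obtain ⟨e, he, hxe⟩ := exists_lt_of_lt_csSup hne hx.2
      exact hEd e he x hx.1 hxe.le
    have hsub2 : E ⊆ Ioc 0 b := fun x hx => ⟨hE0 hx, le_csSup hbd hx⟩
    have key : ∀ f : ℝ → ℝ≥0∞, ∫⁻ τ in E, f τ = ∫⁻ τ in Ioo 0 b, f τ := by
      intro f
      refine le_antisymm ?_ (lintegral_mono_set hsub1)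
      calc ∫⁻ τ in E, f τ ≤ ∫⁻ τ in Ioc 0 b, f τ := lintegral_mono_set hsub2
        _ = ∫⁻ τ in Ioo 0 b, f τ :=
          (setLIntegral_congr (MeasureTheory.Ioo_ae_eq_Ioc (μ := volume) (a := (0:ℝ)) (b := b))).symm
    rw [key (auxTail w), key w, rect_eval w hw hb, add_mul, one_mul]
    exact add_le_add_right (hA b hb) _
  · have hEq : E = Ioi 0 := by
      refine Subset.antisymm hE0 (fun x hx => ?_)
      obtain ⟨e, he, hxe⟩ := not_bddAbove_iff.1 hbd x
      exact hEd e he x hx hxe.le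
    subst hEq
    rw [full_eval w hw, add_mul, one_mul]
    exact le_add_right le_rfl

lemma step_A (ub vb : ℝ → ℝ≥0∞)
    (D : Set (ℝ × ℝ)) (hDm : MeasurableSet D) {s t : ℝ} (hs : 0 < s) (ht : 0 < t) :
    S2E (D.indicator fun _ => (1:ℝ≥0∞)) s t * (ub s * vb t) =
      (((ENNReal.ofReal s)⁻¹ * ub s) * ((ENNReal.ofReal t)⁻¹ * vb t)) *
        volume (D ∩ Ioo 0 s ×ˢ Ioo 0 t) := by
  have h1 : (∫⁻ σ in Ioo (0:ℝ) s, ∫⁻ τ in Ioo (0:ℝ) t,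
      (D.indicator fun _ => (1:ℝ≥0∞)) (σ, τ)) = volume (D ∩ Ioo 0 s ×ˢ Ioo 0 t) := by
    rw [← lintegral_prod _ ((measurable_const.indicator hDm).aemeasurable),
      Measure.prod_restrict, ← Measure.volume_eq_prod, lintegral_indicator_const hDm,
      Measure.restrict_apply hDm, one_mul]
  have h2 : (ENNReal.ofReal (s * t))⁻¹ =
      (ENNReal.ofReal s)⁻¹ * (ENNReal.ofReal t)⁻¹ := by
    rw [ENNReal.ofReal_mul hs.le,
      ENNReal.mul_inv (Or.inl (by simpa using hs)) (Or.inl ENNReal.ofReal_ne_top)]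
  rw [S2E, h1, h2]; ring

noncomputable def Hfun (ub vb : ℝ → ℝ≥0∞) (D : Set (ℝ × ℝ)) (p z : ℝ × ℝ) : ℝ≥0∞ :=
  (((ENNReal.ofReal p.1)⁻¹ * ub p.1) * ((ENNReal.ofReal p.2)⁻¹ * vb p.2)) *
    (D ∩ Ioo 0 p.1 ×ˢ Ioo 0 p.2).indicator (fun _ => (1:ℝ≥0∞)) z

lemma Hfun_meas (ub vb : ℝ → ℝ≥0∞) (hub : Measurable ub) (hvb : Measurable vb)
    (D : Set (ℝ × ℝ)) (hDm : MeasurableSet D) :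
    Measurable (Function.uncurry (Hfun ub vb D)) := by
  have hT : MeasurableSet {q : (ℝ × ℝ) × (ℝ × ℝ) |
      q.2 ∈ D ∧ (0 < q.2.1 ∧ q.2.1 < q.1.1) ∧ (0 < q.2.2 ∧ q.2.2 < q.1.2)} := by
    refine (measurable_snd hDm).inter (MeasurableSet.inter ?_ ?_)
    · exact ((measurableSet_lt measurable_const
        (measurable_fst.comp measurable_snd)).inter
        (measurableSet_lt (measurable_fst.comp measurable_snd)
          (measurable_fst.comp measurable_fst)))
    · exact ((measurableSet_lt measurable_const
        (measurable_snd.comp measurable_snd)).inter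
        (measurableSet_lt (measurable_snd.comp measurable_snd)
          (measurable_snd.comp measurable_fst)))
  have hind : (fun q : (ℝ × ℝ) × (ℝ × ℝ) =>
      (D ∩ Ioo 0 q.1.1 ×ˢ Ioo 0 q.1.2).indicator (fun _ => (1:ℝ≥0∞)) q.2) =
      ({q : (ℝ × ℝ) × (ℝ × ℝ) |
        q.2 ∈ D ∧ (0 < q.2.1 ∧ q.2.1 < q.1.1) ∧ (0 < q.2.2 ∧ q.2.2 < q.1.2)}).indicator
        (fun _ => (1:ℝ≥0∞)) := by
    funext q
    by_cases h : q.2 ∈ D ∩ Ioo 0 q.1.1 ×ˢ Ioo 0 q.1.2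
    · rw [Set.indicator_of_mem h, Set.indicator_of_mem]
      obtain ⟨h1, h2⟩ := h
      exact ⟨h1, by simpa [Set.mem_prod, Set.mem_Ioo] using h2⟩
    · rw [Set.indicator_of_notMem h, Set.indicator_of_notMem]
      intro hc
      exact h ⟨hc.1, by simp only [Set.mem_prod, Set.mem_Ioo]; tauto⟩
  have h2 : Measurable (fun q : (ℝ × ℝ) × (ℝ × ℝ) =>
      (D ∩ Ioo 0 q.1.1 ×ˢ Ioo 0 q.1.2).indicator (fun _ => (1:ℝ≥0∞)) q.2) := by
    rw [hind]; exact measurable_const.indicator hT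
  exact ((((ENNReal.measurable_ofReal.comp (measurable_fst.comp measurable_fst)).inv.mul
    (hub.comp (measurable_fst.comp measurable_fst))).mul
    ((ENNReal.measurable_ofReal.comp (measurable_snd.comp measurable_fst)).inv.mul
    (hvb.comp (measurable_snd.comp measurable_fst))))).mul h2

lemma numerator_eq (ub vb : ℝ → ℝ≥0∞) (hub : Measurable ub) (hvb : Measurable vb)
    (D : Set (ℝ × ℝ)) (hDm : MeasurableSet D) (hDsub : D ⊆ Ioi 0 ×ˢ Ioi 0) :
    (∫⁻ s in Ioi (0:ℝ), ∫⁻ t in Ioi (0:ℝ),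
        S2E (D.indicator fun _ => (1:ℝ≥0∞)) s t * (ub s * vb t)) =
      ∫⁻ z in D, auxTail ub z.1 * auxTail vb z.2 := by
  have hHmeas := Hfun_meas ub vb hub hvb D hDm
  have hrectm : ∀ p : ℝ × ℝ, MeasurableSet (D ∩ Ioo 0 p.1 ×ˢ Ioo 0 p.2) :=
    fun p => hDm.inter (measurableSet_Ioo.prod measurableSet_Ioo)
  calc (∫⁻ s in Ioi (0:ℝ), ∫⁻ t in Ioi (0:ℝ),
        S2E (D.indicator fun _ => (1:ℝ≥0∞)) s t * (ub s * vb t))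
      = ∫⁻ s in Ioi (0:ℝ), ∫⁻ t in Ioi (0:ℝ), ∫⁻ z, Hfun ub vb D (s, t) z := by
        refine setLIntegral_congr_fun measurableSet_Ioi
          (@fun s (hs : 0 < s) => ?_)
        refine setLIntegral_congr_fun measurableSet_Ioi
          (@fun t (ht : 0 < t) => ?_)
        rw [step_A ub vb D hDm hs ht]
        rw [show (fun z => Hfun ub vb D (s, t) z) = fun z =>
          (((ENNReal.ofReal s)⁻¹ * ub s) * ((ENNReal.ofReal t)⁻¹ * vb t)) *
            (D ∩ Ioo 0 s ×ˢ Ioo 0 t).indicator (fun _ => (1:ℝ≥0∞)) z from rfl,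
          lintegral_const_mul _ (measurable_const.indicator (hrectm (s, t))),
          lintegral_indicator_const (hrectm (s, t)), one_mul]
    _ = ∫⁻ p, (∫⁻ z, Hfun ub vb D p z)
          ∂((volume.restrict (Ioi (0:ℝ))).prod (volume.restrict (Ioi (0:ℝ)))) := by
        have hm : Measurable fun p : ℝ × ℝ => ∫⁻ z, Hfun ub vb D p z :=
          Measurable.lintegral_prod_right (ν := (volume : Measure (ℝ × ℝ))) hHmeas
        exact (lintegral_prod (μ := volume.restrict (Ioi (0:ℝ)))
          (ν := volume.restrict (Ioi (0:ℝ))) _ hm.aemeasurable).symm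
    _ = ∫⁻ z, ∫⁻ p, Hfun ub vb D p z
          ∂((volume.restrict (Ioi (0:ℝ))).prod (volume.restrict (Ioi (0:ℝ)))) :=
        lintegral_lintegral_swap
          (μ := (volume.restrict (Ioi (0:ℝ))).prod (volume.restrict (Ioi (0:ℝ))))
          (ν := (volume : Measure (ℝ × ℝ))) hHmeas.aemeasurable
    _ = ∫⁻ z, D.indicator (fun z => auxTail ub z.1 * auxTail vb z.2) z := by
        refine lintegral_congr (fun z => ?_)
        by_cases hz : z ∈ D
        · have hz1 : (0:ℝ) < z.1 := (hDsub hz).1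
          have hz2 : (0:ℝ) < z.2 := (hDsub hz).2
          have hpt : ∀ p : ℝ × ℝ, Hfun ub vb D p z =
              ((Ioi z.1).indicator (fun s => (ENNReal.ofReal s)⁻¹ * ub s) p.1) *
              ((Ioi z.2).indicator (fun t => (ENNReal.ofReal t)⁻¹ * vb t) p.2) := by
            intro p
            by_cases h1 : z.1 < p.1 <;> by_cases h2 : z.2 < p.2 <;>
              simp [Hfun, Set.indicator_apply, Set.mem_prod, Set.mem_Ioo, hz, hz1, hz2,
                h1, h2, mem_Ioi] <;> ring
          simp_rw [hpt]
          rw [lintegral_prod_mul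
            (f := (Ioi z.1).indicator (fun s => (ENNReal.ofReal s)⁻¹ * ub s))
            (g := (Ioi z.2).indicator (fun t => (ENNReal.ofReal t)⁻¹ * vb t))
            ((measurable_ofReal.inv.mul hub).indicator measurableSet_Ioi).aemeasurable
            ((measurable_ofReal.inv.mul hvb).indicator measurableSet_Ioi).aemeasurable]
          rw [Set.indicator_of_mem hz]
          rw [lintegral_indicator measurableSet_Ioi, lintegral_indicator measurableSet_Ioi,
            Measure.restrict_restrict measurableSet_Ioi,
            Measure.restrict_restrict measurableSet_Ioi,
            inter_eq_left.mpr (Ioi_subset_Ioi hz1.le),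
            inter_eq_left.mpr (Ioi_subset_Ioi hz2.le)]
          rfl
        · have : ∀ p : ℝ × ℝ, Hfun ub vb D p z = 0 := by
            intro p
            have : z ∉ D ∩ Ioo 0 p.1 ×ˢ Ioo 0 p.2 := fun hc => hz hc.1
            simp [Hfun, Set.indicator_of_notMem this]
          simp_rw [this]
          rw [lintegral_zero, Set.indicator_of_notMem hz]
    _ = ∫⁻ z in D, auxTail ub z.1 * auxTail vb z.2 := lintegral_indicator hDm _

lemma rep_fst (f g : ℝ → ℝ≥0∞) (hf : Measurable f) (hg : Measurable g)
    (D : Set (ℝ × ℝ)) (hDm : MeasurableSet D) :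
    (∫⁻ z in D, f z.1 * g z.2) =
      ∫⁻ σ, f σ * ∫⁻ τ in {τ | (σ, τ) ∈ D}, g τ := by
  have hmul : Measurable fun z : ℝ × ℝ => f z.1 * g z.2 :=
    (hf.comp measurable_fst).mul (hg.comp measurable_snd)
  rw [← lintegral_indicator hDm, Measure.volume_eq_prod,
    lintegral_prod _ (hmul.indicator hDm).aemeasurable]
  refine lintegral_congr (fun σ => ?_)
  have h1 : ∀ τ, D.indicator (fun z => f z.1 * g z.2) (σ, τ) =
      f σ * {τ | (σ, τ) ∈ D}.indicator g τ := by
    intro τ; by_cases h : (σ, τ) ∈ D <;>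
      simp [Set.indicator_apply, h, mem_setOf_eq]
  have hsm : MeasurableSet {τ | (σ, τ) ∈ D} := measurable_prodMk_left hDm
  simp_rw [h1]
  rw [lintegral_const_mul _ (hg.indicator hsm), lintegral_indicator hsm]

lemma rep_snd (f g : ℝ → ℝ≥0∞) (hf : Measurable f) (hg : Measurable g)
    (D : Set (ℝ × ℝ)) (hDm : MeasurableSet D) :
    (∫⁻ z in D, f z.1 * g z.2) =
      ∫⁻ τ, g τ * ∫⁻ σ in {σ | (σ, τ) ∈ D}, f σ := by
  have hm : Measurable (Function.uncurry fun σ τ =>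
      D.indicator (fun z => f z.1 * g z.2) (σ, τ)) := by
    have : (Function.uncurry fun σ τ => D.indicator (fun z => f z.1 * g z.2) (σ, τ)) =
        D.indicator (fun z => f z.1 * g z.2) := by
      funext q; rfl
    rw [this]
    have hmul : Measurable fun z : ℝ × ℝ => f z.1 * g z.2 :=
      (hf.comp measurable_fst).mul (hg.comp measurable_snd)
    exact hmul.indicator hDm
  have hmul : Measurable fun z : ℝ × ℝ => f z.1 * g z.2 :=
    (hf.comp measurable_fst).mul (hg.comp measurable_snd)
  rw [← lintegral_indicator hDm, Measure.volume_eq_prod,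
    lintegral_prod _ (hmul.indicator hDm).aemeasurable]
  rw [lintegral_lintegral_swap (μ := (volume : Measure ℝ)) (ν := (volume : Measure ℝ))
    hm.aemeasurable]
  refine lintegral_congr (fun τ => ?_)
  have h1 : ∀ σ, D.indicator (fun z => f z.1 * g z.2) (σ, τ) =
      g τ * {σ | (σ, τ) ∈ D}.indicator f σ := by
    intro σ; by_cases h : (σ, τ) ∈ D <;>
      simp [Set.indicator_apply, h, mem_setOf_eq, mul_comm]
  simp_rw [h1]
  have hsm : MeasurableSet {σ | (σ, τ) ∈ D} :=
    (measurable_prodMk_right (y := τ)) hDm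
  rw [lintegral_const_mul _ (hf.indicator hsm), lintegral_indicator hsm]

lemma main_bound (ub vb : ℝ → ℝ≥0∞) (hub : Measurable ub) (hvb : Measurable vb)
    (A B : ℝ≥0∞)
    (hA : ∀ b : ℝ, 0 < b → ENNReal.ofReal b * auxTail ub b ≤ A * ∫⁻ t in Ioo 0 b, ub t)
    (hB : ∀ b : ℝ, 0 < b → ENNReal.ofReal b * auxTail vb b ≤ B * ∫⁻ t in Ioo 0 b, vb t)
    (D : Set (ℝ × ℝ)) (hDm : MeasurableSet D) (hDsub : D ⊆ Ioi 0 ×ˢ Ioi 0)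
    (hDd : ∀ s t s' t' : ℝ, (s, t) ∈ D → 0 < s' → s' ≤ s → 0 < t' → t' ≤ t → (s', t') ∈ D) :
    (∫⁻ z in D, auxTail ub z.1 * auxTail vb z.2) ≤
      ((1 + A) * (1 + B)) * ∫⁻ z in D, ub z.1 * vb z.2 := by
  -- section properties
  have hsecY : ∀ σ : ℝ, {τ | (σ, τ) ∈ D} ⊆ Ioi 0 := fun σ τ hτ => (hDsub hτ).2
  have hsecYd : ∀ σ : ℝ, ∀ x ∈ {τ | (σ, τ) ∈ D}, ∀ y : ℝ, 0 < y → y ≤ x →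
      y ∈ {τ | (σ, τ) ∈ D} := by
    intro σ x hx y hy hyx
    exact hDd σ x σ y hx (hDsub hx).1 le_rfl hy hyx
  have hsecX : ∀ τ : ℝ, {σ | (σ, τ) ∈ D} ⊆ Ioi 0 := fun τ σ hσ => (hDsub hσ).1
  have hsecXd : ∀ τ : ℝ, ∀ x ∈ {σ | (σ, τ) ∈ D}, ∀ y : ℝ, 0 < y → y ≤ x →
      y ∈ {σ | (σ, τ) ∈ D} := by
    intro τ x hx y hy hyx
    exact hDd x τ y τ hx hy hyx (hDsub hx).2 le_rfl
  -- measurability of section integrals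
  have hφ : Measurable fun σ => ∫⁻ τ in {τ | (σ, τ) ∈ D}, vb τ := by
    have h1 : (fun σ => ∫⁻ τ in {τ | (σ, τ) ∈ D}, vb τ) =
        fun σ => ∫⁻ τ, D.indicator (fun z => vb z.2) (σ, τ) := by
      funext σ
      have hsm : MeasurableSet {τ | (σ, τ) ∈ D} := measurable_prodMk_left hDm
      rw [← lintegral_indicator hsm]
      refine lintegral_congr (fun τ => ?_)
      by_cases h : (σ, τ) ∈ D <;> simp [Set.indicator_apply, h]
    rw [h1]
    exact Measurable.lintegral_prod_right (ν := (volume : Measure ℝ))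
      ((hvb.comp measurable_snd).indicator hDm)
  have hψ : Measurable fun τ => ∫⁻ σ in {σ | (σ, τ) ∈ D}, ub σ := by
    have h1 : (fun τ => ∫⁻ σ in {σ | (σ, τ) ∈ D}, ub σ) =
        fun τ => ∫⁻ σ, D.indicator (fun z => ub z.1) (σ, τ) := by
      funext τ
      have hsm : MeasurableSet {σ | (σ, τ) ∈ D} := (measurable_prodMk_right (y := τ)) hDm
      rw [← lintegral_indicator hsm]
      refine lintegral_congr (fun σ => ?_)
      by_cases h : (σ, τ) ∈ D <;> simp [Set.indicator_apply, h]
    rw [h1]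
    have hu : Measurable (Function.uncurry fun τ σ =>
        D.indicator (fun z => ub z.1) (σ, τ)) := by
      have : (Function.uncurry fun (τ σ : ℝ) => D.indicator (fun z => ub z.1) (σ, τ)) =
          fun q : ℝ × ℝ => D.indicator (fun z => ub z.1) (q.2, q.1) := rfl
      rw [this]
      exact ((hub.comp measurable_fst).indicator hDm).comp
        (measurable_snd.prodMk measurable_fst)
    exact Measurable.lintegral_prod_right (ν := (volume : Measure ℝ)) hu
  calc (∫⁻ z in D, auxTail ub z.1 * auxTail vb z.2)
      = ∫⁻ σ, auxTail ub σ * ∫⁻ τ in {τ | (σ, τ) ∈ D}, auxTail vb τ :=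
        rep_fst _ _ (auxTail_measurable ub) (auxTail_measurable vb) D hDm
    _ ≤ ∫⁻ σ, auxTail ub σ * ((1 + B) * ∫⁻ τ in {τ | (σ, τ) ∈ D}, vb τ) := by
        refine lintegral_mono (fun σ => ?_)
        exact mul_le_mul_right (section_bound vb hvb B hB (hsecY σ) (hsecYd σ)) _
    _ = (1 + B) * ∫⁻ σ, auxTail ub σ * ∫⁻ τ in {τ | (σ, τ) ∈ D}, vb τ := by
        rw [← lintegral_const_mul _ (f := fun σ => auxTail ub σ * ∫⁻ τ in {τ | (σ, τ) ∈ D}, vb τ)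
            ((auxTail_measurable ub).mul hφ)]
        refine lintegral_congr (fun σ => ?_); ring
    _ = (1 + B) * ∫⁻ z in D, auxTail ub z.1 * vb z.2 := by
        rw [← rep_fst _ _ (auxTail_measurable ub) hvb D hDm]
    _ = (1 + B) * ∫⁻ τ, vb τ * ∫⁻ σ in {σ | (σ, τ) ∈ D}, auxTail ub σ := by
        rw [rep_snd _ _ (auxTail_measurable ub) hvb D hDm]
    _ ≤ (1 + B) * ∫⁻ τ, vb τ * ((1 + A) * ∫⁻ σ in {σ | (σ, τ) ∈ D}, ub σ) := by
        refine mul_le_mul_right (lintegral_mono (fun τ => ?_)) _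
        exact mul_le_mul_right (section_bound ub hub A hA (hsecX τ) (hsecXd τ)) _
    _ = (1 + B) * ((1 + A) * ∫⁻ τ, vb τ * ∫⁻ σ in {σ | (σ, τ) ∈ D}, ub σ) := by
        rw [← lintegral_const_mul _ (f := fun τ => vb τ * ∫⁻ σ in {σ | (σ, τ) ∈ D}, ub σ)
            (hvb.mul hψ)]
        congr 1
        refine lintegral_congr (fun τ => ?_); ring
    _ = ((1 + A) * (1 + B)) * ∫⁻ z in D, ub z.1 * vb z.2 := by
        rw [← rep_snd _ _ hub hvb D hDm]; ring

lemma ae_comp_fst {f g : ℝ → ℝ≥0∞} (h : f =ᵐ[volume.restrict (Ioi (0:ℝ))] g)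
    {D : Set (ℝ × ℝ)} (hDm : MeasurableSet D) (hDsub : D ⊆ Ioi 0 ×ˢ Ioi 0) :
    (fun z : ℝ × ℝ => f z.1) =ᵐ[(volume : Measure (ℝ × ℝ)).restrict D] fun z => g z.1 := by
  have hN : volume ({s : ℝ | f s ≠ g s} ∩ Ioi 0) = 0 := by
    have h' := h
    rw [Filter.EventuallyEq, ae_iff, Measure.restrict_apply' measurableSet_Ioi] at h'
    exact h'
  have hnull : (volume : Measure (ℝ × ℝ)) (({s : ℝ | f s ≠ g s} ∩ Ioi 0) ×ˢ (univ : Set ℝ)) = 0 := by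
    rw [Measure.volume_eq_prod, Measure.prod_prod, hN, zero_mul]
  rw [Filter.EventuallyEq, ae_iff, Measure.restrict_apply' hDm]
  refine measure_mono_null ?_ hnull
  intro z hz
  exact ⟨⟨hz.1, (hDsub hz.2).1⟩, mem_univ _⟩

lemma ae_comp_snd {f g : ℝ → ℝ≥0∞} (h : f =ᵐ[volume.restrict (Ioi (0:ℝ))] g)
    {D : Set (ℝ × ℝ)} (hDm : MeasurableSet D) (hDsub : D ⊆ Ioi 0 ×ˢ Ioi 0) :
    (fun z : ℝ × ℝ => f z.2) =ᵐ[(volume : Measure (ℝ × ℝ)).restrict D] fun z => g z.2 := by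
  have hN : volume ({s : ℝ | f s ≠ g s} ∩ Ioi 0) = 0 := by
    have h' := h
    rw [Filter.EventuallyEq, ae_iff, Measure.restrict_apply' measurableSet_Ioi] at h'
    exact h'
  have hnull : (volume : Measure (ℝ × ℝ)) ((univ : Set ℝ) ×ˢ ({s : ℝ | f s ≠ g s} ∩ Ioi 0)) = 0 := by
    rw [Measure.volume_eq_prod, Measure.prod_prod, hN, mul_zero]
  rw [Filter.EventuallyEq, ae_iff, Measure.restrict_apply' hDm]
  refine measure_mono_null ?_ hnull
  intro z hz
  exact ⟨mem_univ _, ⟨hz.1, (hDsub hz.2).2⟩⟩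

lemma prod_rect_eval (F G : ℝ → ℝ≥0∞) (S T : Set ℝ)
    (hF : AEMeasurable F (volume.restrict S)) (hG : AEMeasurable G (volume.restrict T)) :
    (∫⁻ z in S ×ˢ T, F z.1 * G z.2) = (∫⁻ s in S, F s) * ∫⁻ t in T, G t := by
  rw [Measure.volume_eq_prod, ← Measure.prod_restrict, lintegral_prod_mul hF hG]

lemma quot_arith (X Y P Q : ℝ≥0∞) (hP0 : P ≠ 0) (hPt : P ≠ ⊤) (hQ0 : Q ≠ 0) (hQt : Q ≠ ⊤) :
    ((P + X) * (Q + Y)) / (P * Q) = (1 + X / P) * (1 + Y / Q) := by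
  have e1 : (1 : ℝ≥0∞) + X / P = (P + X) * P⁻¹ := by
    rw [← div_eq_mul_inv, ENNReal.add_div, ENNReal.div_self hP0 hPt]
  have e2 : (1 : ℝ≥0∞) + Y / Q = (Q + Y) * Q⁻¹ := by
    rw [← div_eq_mul_inv, ENNReal.add_div, ENNReal.div_self hQ0 hQt]
  rw [e1, e2, div_eq_mul_inv, ENNReal.mul_inv (Or.inl hP0) (Or.inl hPt)]
  ring

end

/-- for product weights, the supremum over nonempty decreasing sets `D` of
`∫_{ℝ²₊} S²(χ_D) u v / ∫_D u v` equals
`(1 + sup_a (a∫_a^∞ u(s)/s ds)/(∫_0^a u)) (1 + sup_b (b∫_b^∞ v(t)/t dt)/(∫_0^b v))`. -/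
theorem sup_quotient_decreasing_sets (u v : ℝ → ℝ) (hu : IsWeight u) (hv : IsWeight v)
    (hu1 : ∀ a : ℝ, 0 < a → 0 < ∫⁻ s in Ioo (0:ℝ) a, ENNReal.ofReal (u s))
    (hu2 : ∀ a : ℝ, 0 < a → (∫⁻ s in Ioo (0:ℝ) a, ENNReal.ofReal (u s)) < ⊤)
    (hv1 : ∀ b : ℝ, 0 < b → 0 < ∫⁻ t in Ioo (0:ℝ) b, ENNReal.ofReal (v t))
    (hv2 : ∀ b : ℝ, 0 < b → (∫⁻ t in Ioo (0:ℝ) b, ENNReal.ofReal (v t)) < ⊤) :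
    (⨆ (D : Set (ℝ × ℝ)) (_ : DecreasingSet D ∧ D.Nonempty),
        (∫⁻ s in Ioi (0:ℝ), ∫⁻ t in Ioi (0:ℝ),
            S2E (D.indicator fun _ => (1:ℝ≥0∞)) s t *
              (ENNReal.ofReal (u s) * ENNReal.ofReal (v t))) /
          ∫⁻ z in D, ENNReal.ofReal (u z.1) * ENNReal.ofReal (v z.2)) =
      (1 + ⨆ (a : ℝ) (_ : 0 < a),
          (ENNReal.ofReal a * ∫⁻ s in Ioi a, ENNReal.ofReal (u s / s)) /
            ∫⁻ s in Ioo (0:ℝ) a, ENNReal.ofReal (u s)) *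
        (1 + ⨆ (b : ℝ) (_ : 0 < b),
          (ENNReal.ofReal b * ∫⁻ t in Ioi b, ENNReal.ofReal (v t / t)) /
            ∫⁻ t in Ioo (0:ℝ) b, ENNReal.ofReal (v t)) := by
  obtain ⟨hu0, huloc⟩ := hu
  obtain ⟨hv0, hvloc⟩ := hv
  -- measurable representatives
  have hum : AEMeasurable (fun s => ENNReal.ofReal (u s)) (volume.restrict (Ioi (0:ℝ))) :=
    ENNReal.measurable_ofReal.comp_aemeasurable huloc.aestronglyMeasurable.aemeasurable
  have hvm : AEMeasurable (fun t => ENNReal.ofReal (v t)) (volume.restrict (Ioi (0:ℝ))) :=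
    ENNReal.measurable_ofReal.comp_aemeasurable hvloc.aestronglyMeasurable.aemeasurable
  set ub : ℝ → ℝ≥0∞ := hum.mk _ with hubdef
  set vb : ℝ → ℝ≥0∞ := hvm.mk _ with hvbdef
  have hub : Measurable ub := hum.measurable_mk
  have hvb : Measurable vb := hvm.measurable_mk
  have huae : (fun s => ENNReal.ofReal (u s)) =ᵐ[volume.restrict (Ioi (0:ℝ))] ub := hum.ae_eq_mk
  have hvae : (fun t => ENNReal.ofReal (v t)) =ᵐ[volume.restrict (Ioi (0:ℝ))] vb := hvm.ae_eq_mk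
  -- conversions
  have hUconv : ∀ a : ℝ, 0 < a →
      (∫⁻ t in Ioo (0:ℝ) a, ub t) = ∫⁻ t in Ioo (0:ℝ) a, ENNReal.ofReal (u t) := by
    intro a _
    refine lintegral_congr_ae ?_
    filter_upwards [ae_restrict_of_ae_restrict_of_subset Ioo_subset_Ioi_self huae]
      with t ht using ht.symm
  have hVconv : ∀ a : ℝ, 0 < a →
      (∫⁻ t in Ioo (0:ℝ) a, vb t) = ∫⁻ t in Ioo (0:ℝ) a, ENNReal.ofReal (v t) := by
    intro a _
    refine lintegral_congr_ae ?_
    filter_upwards [ae_restrict_of_ae_restrict_of_subset Ioo_subset_Ioi_self hvae]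
      with t ht using ht.symm
  have hTconv : ∀ a : ℝ, 0 < a →
      auxTail ub a = ∫⁻ s in Ioi a, ENNReal.ofReal (u s / s) := by
    intro a ha
    refine lintegral_congr_ae ?_
    filter_upwards [ae_restrict_of_ae_restrict_of_subset (Ioi_subset_Ioi ha.le) huae,
      ae_restrict_mem measurableSet_Ioi] with s hs hmem
    have hspos : (0:ℝ) < s := lt_trans ha hmem
    rw [ENNReal.ofReal_div_of_pos hspos, div_eq_mul_inv, hs, mul_comm]
  have hSconv : ∀ a : ℝ, 0 < a →
      auxTail vb a = ∫⁻ t in Ioi a, ENNReal.ofReal (v t / t) := by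
    intro a ha
    refine lintegral_congr_ae ?_
    filter_upwards [ae_restrict_of_ae_restrict_of_subset (Ioi_subset_Ioi ha.le) hvae,
      ae_restrict_mem measurableSet_Ioi] with s hs hmem
    have hspos : (0:ℝ) < s := lt_trans ha hmem
    rw [ENNReal.ofReal_div_of_pos hspos, div_eq_mul_inv, hs, mul_comm]
  set SA := ⨆ (a : ℝ) (_ : 0 < a),
      (ENNReal.ofReal a * ∫⁻ s in Ioi a, ENNReal.ofReal (u s / s)) /
        ∫⁻ s in Ioo (0:ℝ) a, ENNReal.ofReal (u s) with hSA
  set SB := ⨆ (b : ℝ) (_ : 0 < b),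
      (ENNReal.ofReal b * ∫⁻ t in Ioi b, ENNReal.ofReal (v t / t)) /
        ∫⁻ t in Ioo (0:ℝ) b, ENNReal.ofReal (v t) with hSB
  have hA : ∀ a : ℝ, 0 < a →
      ENNReal.ofReal a * auxTail ub a ≤ SA * ∫⁻ t in Ioo 0 a, ub t := by
    intro a ha
    rw [hTconv a ha, hUconv a ha]
    have hle : (ENNReal.ofReal a * ∫⁻ s in Ioi a, ENNReal.ofReal (u s / s)) /
        (∫⁻ s in Ioo (0:ℝ) a, ENNReal.ofReal (u s)) ≤ SA := by
      rw [hSA]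
      exact le_iSup₂ (f := fun (a : ℝ) (_ : 0 < a) =>
        (ENNReal.ofReal a * ∫⁻ s in Ioi a, ENNReal.ofReal (u s / s)) /
          ∫⁻ s in Ioo (0:ℝ) a, ENNReal.ofReal (u s)) a ha
    rw [ENNReal.div_le_iff_le_mul (Or.inl (hu1 a ha).ne') (Or.inl (hu2 a ha).ne)] at hle
    exact hle
  have hB : ∀ b : ℝ, 0 < b →
      ENNReal.ofReal b * auxTail vb b ≤ SB * ∫⁻ t in Ioo 0 b, vb t := by
    intro b hb
    rw [hSconv b hb, hVconv b hb]
    have hle : (ENNReal.ofReal b * ∫⁻ t in Ioi b, ENNReal.ofReal (v t / t)) /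
        (∫⁻ t in Ioo (0:ℝ) b, ENNReal.ofReal (v t)) ≤ SB := by
      rw [hSB]
      exact le_iSup₂ (f := fun (b : ℝ) (_ : 0 < b) =>
        (ENNReal.ofReal b * ∫⁻ t in Ioi b, ENNReal.ofReal (v t / t)) /
          ∫⁻ t in Ioo (0:ℝ) b, ENNReal.ofReal (v t)) b hb
    rw [ENNReal.div_le_iff_le_mul (Or.inl (hv1 b hb).ne') (Or.inl (hv2 b hb).ne)] at hle
    exact hle
  -- numerator and denominator rewrites
  have hnum : ∀ D : Set (ℝ × ℝ), DecreasingSet D →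
      (∫⁻ s in Ioi (0:ℝ), ∫⁻ t in Ioi (0:ℝ),
        S2E (D.indicator fun _ => (1:ℝ≥0∞)) s t *
          (ENNReal.ofReal (u s) * ENNReal.ofReal (v t)))
      = ∫⁻ z in D, auxTail ub z.1 * auxTail vb z.2 := by
    intro D hD
    have h1 : (∫⁻ s in Ioi (0:ℝ), ∫⁻ t in Ioi (0:ℝ),
        S2E (D.indicator fun _ => (1:ℝ≥0∞)) s t *
          (ENNReal.ofReal (u s) * ENNReal.ofReal (v t)))
        = ∫⁻ s in Ioi (0:ℝ), ∫⁻ t in Ioi (0:ℝ),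
            S2E (D.indicator fun _ => (1:ℝ≥0∞)) s t * (ub s * vb t) := by
      refine lintegral_congr_ae ?_
      filter_upwards [huae] with s hs
      refine lintegral_congr_ae ?_
      filter_upwards [hvae] with t ht
      rw [hs, ht]
    rw [h1]
    exact numerator_eq ub vb hub hvb D hD.1 hD.2.1
  have hden : ∀ D : Set (ℝ × ℝ), DecreasingSet D →
      (∫⁻ z in D, ENNReal.ofReal (u z.1) * ENNReal.ofReal (v z.2))
        = ∫⁻ z in D, ub z.1 * vb z.2 := fun D hD =>
    lintegral_congr_ae ((ae_comp_fst huae hD.1 hD.2.1).mul (ae_comp_snd hvae hD.1 hD.2.1))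
  refine le_antisymm ?_ ?_
  · -- upper bound
    refine iSup₂_le (fun D hD => ?_)
    obtain ⟨hDec, hne⟩ := hD
    have hM0 : (∫⁻ z in D, ENNReal.ofReal (u z.1) * ENNReal.ofReal (v z.2)) ≠ 0 := by
      obtain ⟨z0, hz0⟩ := hne
      have hs0 : (0:ℝ) < z0.1 := (hDec.2.1 hz0).1
      have ht0 : (0:ℝ) < z0.2 := (hDec.2.1 hz0).2
      have hsub : Ioo 0 z0.1 ×ˢ Ioo 0 z0.2 ⊆ D := by
        intro z hz
        exact hDec.2.2 z0.1 z0.2 z.1 z.2 hz0 hz.1.1 hz.1.2.le hz.2.1 hz.2.2.le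
      have hpos : 0 < ∫⁻ z in Ioo 0 z0.1 ×ˢ Ioo 0 z0.2,
          ENNReal.ofReal (u z.1) * ENNReal.ofReal (v z.2) := by
        rw [prod_rect_eval _ _ _ _
          (hum.mono_measure (Measure.restrict_mono Ioo_subset_Ioi_self le_rfl))
          (hvm.mono_measure (Measure.restrict_mono Ioo_subset_Ioi_self le_rfl))]
        exact ENNReal.mul_pos (hu1 _ hs0).ne' (hv1 _ ht0).ne'
      exact (lt_of_lt_of_le hpos (lintegral_mono_set hsub)).ne'
    have hC0 : ((1 + SA) * (1 + SB)) ≠ 0 := by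
      refine mul_ne_zero ?_ ?_ <;> exact fun h => by simp [add_eq_zero] at h
    rw [ENNReal.div_le_iff_le_mul (Or.inl hM0) (Or.inr hC0)]
    calc (∫⁻ s in Ioi (0:ℝ), ∫⁻ t in Ioi (0:ℝ),
          S2E (D.indicator fun _ => (1:ℝ≥0∞)) s t *
            (ENNReal.ofReal (u s) * ENNReal.ofReal (v t)))
        = ∫⁻ z in D, auxTail ub z.1 * auxTail vb z.2 := hnum D hDec
      _ ≤ ((1 + SA) * (1 + SB)) * ∫⁻ z in D, ub z.1 * vb z.2 :=
          main_bound ub vb hub hvb SA SB hA hB D hDec.1 hDec.2.1 hDec.2.2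
      _ = ((1 + SA) * (1 + SB)) *
            ∫⁻ z in D, ENNReal.ofReal (u z.1) * ENNReal.ofReal (v z.2) := by
          rw [hden D hDec]
  · -- lower bound
    haveI : Nonempty {a : ℝ // 0 < a} := ⟨⟨1, one_pos⟩⟩
    have hQle : ∀ a b : ℝ, 0 < a → 0 < b →
        (1 + (ENNReal.ofReal a * ∫⁻ s in Ioi a, ENNReal.ofReal (u s / s)) /
            (∫⁻ s in Ioo (0:ℝ) a, ENNReal.ofReal (u s))) *
        (1 + (ENNReal.ofReal b * ∫⁻ t in Ioi b, ENNReal.ofReal (v t / t)) /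
            (∫⁻ t in Ioo (0:ℝ) b, ENNReal.ofReal (v t))) ≤
        ⨆ (D : Set (ℝ × ℝ)) (_ : DecreasingSet D ∧ D.Nonempty),
          (∫⁻ s in Ioi (0:ℝ), ∫⁻ t in Ioi (0:ℝ),
              S2E (D.indicator fun _ => (1:ℝ≥0∞)) s t *
                (ENNReal.ofReal (u s) * ENNReal.ofReal (v t))) /
            ∫⁻ z in D, ENNReal.ofReal (u z.1) * ENNReal.ofReal (v z.2) := by
      intro a b ha hb
      set Dr : Set (ℝ × ℝ) := Ioc 0 a ×ˢ Ioc 0 b with hDr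
      have hDrdec : DecreasingSet Dr :=
        ⟨measurableSet_Ioc.prod measurableSet_Ioc,
         fun z hz => ⟨hz.1.1, hz.2.1⟩,
         fun s t s' t' hst hs' hs'le ht' ht'le =>
           ⟨⟨hs', hs'le.trans hst.1.2⟩, ⟨ht', ht'le.trans hst.2.2⟩⟩⟩
      have hDrne : Dr.Nonempty := ⟨(a, b), ⟨⟨ha, le_rfl⟩, ⟨hb, le_rfl⟩⟩⟩
      have hnum' : (∫⁻ s in Ioi (0:ℝ), ∫⁻ t in Ioi (0:ℝ),
          S2E (Dr.indicator fun _ => (1:ℝ≥0∞)) s t *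
            (ENNReal.ofReal (u s) * ENNReal.ofReal (v t)))
          = ((∫⁻ s in Ioo (0:ℝ) a, ENNReal.ofReal (u s)) +
              ENNReal.ofReal a * ∫⁻ s in Ioi a, ENNReal.ofReal (u s / s)) *
            ((∫⁻ t in Ioo (0:ℝ) b, ENNReal.ofReal (v t)) +
              ENNReal.ofReal b * ∫⁻ t in Ioi b, ENNReal.ofReal (v t / t)) := by
        rw [hnum Dr hDrdec, hDr,
          prod_rect_eval _ _ _ _ (auxTail_measurable ub).aemeasurable
            (auxTail_measurable vb).aemeasurable]
        congr 1
        · calc ∫⁻ s in Ioc (0:ℝ) a, auxTail ub s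
              = ∫⁻ s in Ioo (0:ℝ) a, auxTail ub s :=
                (setLIntegral_congr (MeasureTheory.Ioo_ae_eq_Ioc (μ := volume)
                  (a := (0:ℝ)) (b := a))).symm
            _ = (∫⁻ s in Ioo (0:ℝ) a, ub s) + ENNReal.ofReal a * auxTail ub a :=
                rect_eval ub hub ha
            _ = _ := by rw [hUconv a ha, hTconv a ha]
        · calc ∫⁻ t in Ioc (0:ℝ) b, auxTail vb t
              = ∫⁻ t in Ioo (0:ℝ) b, auxTail vb t :=
                (setLIntegral_congr (MeasureTheory.Ioo_ae_eq_Ioc (μ := volume)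
                  (a := (0:ℝ)) (b := b))).symm
            _ = (∫⁻ t in Ioo (0:ℝ) b, vb t) + ENNReal.ofReal b * auxTail vb b :=
                rect_eval vb hvb hb
            _ = _ := by rw [hVconv b hb, hSconv b hb]
      have hden' : (∫⁻ z in Dr, ENNReal.ofReal (u z.1) * ENNReal.ofReal (v z.2))
          = (∫⁻ s in Ioo (0:ℝ) a, ENNReal.ofReal (u s)) *
            (∫⁻ t in Ioo (0:ℝ) b, ENNReal.ofReal (v t)) := by
        rw [hDr, prod_rect_eval _ _ _ _
          (hum.mono_measure (Measure.restrict_mono Ioc_subset_Ioi_self le_rfl))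
          (hvm.mono_measure (Measure.restrict_mono Ioc_subset_Ioi_self le_rfl))]
        congr 1
        · exact (setLIntegral_congr (MeasureTheory.Ioo_ae_eq_Ioc (μ := volume)
            (a := (0:ℝ)) (b := a))).symm
        · exact (setLIntegral_congr (MeasureTheory.Ioo_ae_eq_Ioc (μ := volume)
            (a := (0:ℝ)) (b := b))).symm
      have hq : (∫⁻ s in Ioi (0:ℝ), ∫⁻ t in Ioi (0:ℝ),
          S2E (Dr.indicator fun _ => (1:ℝ≥0∞)) s t *
            (ENNReal.ofReal (u s) * ENNReal.ofReal (v t))) /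
          (∫⁻ z in Dr, ENNReal.ofReal (u z.1) * ENNReal.ofReal (v z.2))
          = (1 + (ENNReal.ofReal a * ∫⁻ s in Ioi a, ENNReal.ofReal (u s / s)) /
              (∫⁻ s in Ioo (0:ℝ) a, ENNReal.ofReal (u s))) *
            (1 + (ENNReal.ofReal b * ∫⁻ t in Ioi b, ENNReal.ofReal (v t / t)) /
              (∫⁻ t in Ioo (0:ℝ) b, ENNReal.ofReal (v t))) := by
        rw [hnum', hden']
        exact quot_arith _ _ _ _ (hu1 a ha).ne' (hu2 a ha).ne (hv1 b hb).ne' (hv2 b hb).ne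
      rw [← hq]
      exact le_iSup₂ (f := fun (D : Set (ℝ × ℝ)) (_ : DecreasingSet D ∧ D.Nonempty) =>
        (∫⁻ s in Ioi (0:ℝ), ∫⁻ t in Ioi (0:ℝ),
            S2E (D.indicator fun _ => (1:ℝ≥0∞)) s t *
              (ENNReal.ofReal (u s) * ENNReal.ofReal (v t))) /
          ∫⁻ z in D, ENNReal.ofReal (u z.1) * ENNReal.ofReal (v z.2))
        Dr ⟨hDrdec, hDrne⟩
    have eA : (1 : ℝ≥0∞) + SA = ⨆ p : {a : ℝ // 0 < a},
        (1 + (ENNReal.ofReal p.1 * ∫⁻ s in Ioi p.1, ENNReal.ofReal (u s / s)) /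
          (∫⁻ s in Ioo (0:ℝ) p.1, ENNReal.ofReal (u s))) := by
      rw [hSA, iSup_subtype', add_iSup]
    have eB : (1 : ℝ≥0∞) + SB = ⨆ q : {b : ℝ // 0 < b},
        (1 + (ENNReal.ofReal q.1 * ∫⁻ t in Ioi q.1, ENNReal.ofReal (v t / t)) /
          (∫⁻ t in Ioo (0:ℝ) q.1, ENNReal.ofReal (v t))) := by
      rw [hSB, iSup_subtype', add_iSup]
    rw [eA, eB, iSup_mul]
    refine iSup_le (fun p => ?_)
    rw [mul_iSup]
    exact iSup_le (fun q => hQle p.1 q.1 p.2 q.2)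
end
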